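/- arXiv:1111.0952 — 13 statements merged into one kernel-verified Lean document; each statement's English description precedes it below -/
import Mathlib

section
/- Let M be a nonnegative n×m real matrix with rank(M) = r. Then the following are equivalent: (i) there exist a nonnegative n×r matrix A and a nonnegative r×m matrix W with M = A·W; (ii) for every n×r matrix U whose columns form a basis of the column space of M and every m×r matrix V whose columns form a basis of the row space of M, letting M_C be the unique r×m matrix with U·M_C = M and M_R the unique n×r matrix with M_R·Vᵀ = M, there exist r×r real matrices T_C and T_R such that T_C·M_C and M_R·T_R are nonnegative matrices and M_R·T_R·T_C·M_C = M. -/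
open Matrix

private lemma exists_left_factor {n m r : ℕ} (U : Matrix (Fin n) (Fin r) ℝ)
    (B : Matrix (Fin n) (Fin m) ℝ)
    (h : ∀ j, Bᵀ j ∈ Submodule.span ℝ (Set.range Uᵀ)) :
    ∃ C : Matrix (Fin r) (Fin m) ℝ, U * C = B := by
  have h' : ∀ j, ∃ c : Fin r → ℝ, U *ᵥ c = Bᵀ j := by
    intro j
    have hj := h j
    change _ ∈ Submodule.span ℝ (Set.range U.col) at hj
    rw [← Matrix.range_mulVecLin] at hj
    obtain ⟨c, hc⟩ := hj
    exact ⟨c, hc⟩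
  choose c hc using h'
  refine ⟨Matrix.of fun k j => c j k, ?_⟩
  ext i j
  have := congrFun (hc j) i
  simpa [Matrix.mul_apply, Matrix.mulVec, dotProduct] using this

private lemma span_cols_mul_le {n m r : ℕ} (A : Matrix (Fin n) (Fin r) ℝ)
    (W : Matrix (Fin r) (Fin m) ℝ) :
    Submodule.span ℝ (Set.range (A * W)ᵀ) ≤ Submodule.span ℝ (Set.range Aᵀ) := by
  rw [Submodule.span_le]
  rintro _ ⟨j, rfl⟩
  change (A * W)ᵀ j ∈ Submodule.span ℝ (Set.range A.col)
  rw [← Matrix.range_mulVecLin]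
  refine ⟨fun k => W k j, ?_⟩
  ext i
  simp [Matrix.mulVec, Matrix.mul_apply, dotProduct]

private lemma span_rows_mul_le {n m r : ℕ} (A : Matrix (Fin n) (Fin r) ℝ)
    (W : Matrix (Fin r) (Fin m) ℝ) :
    Submodule.span ℝ (Set.range (A * W)) ≤ Submodule.span ℝ (Set.range W) := by
  have h := span_cols_mul_le Wᵀ Aᵀ
  rw [← Matrix.transpose_mul, Matrix.transpose_transpose, Matrix.transpose_transpose] at h
  exact h

/-- For a nonnegative `n × m` matrix `M` with `rank M = r`, having a
nonnegative factorization `M = A * W` of inner dimension `r` is equivalent to the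
condition on bases of the column and row spaces described in the structure lemma for
simplicial factorization. -/
theorem stmt1 {n m r : ℕ} (M : Matrix (Fin n) (Fin m) ℝ)
    (hM : ∀ i j, 0 ≤ M i j) (hrank : M.rank = r) :
    (∃ (A : Matrix (Fin n) (Fin r) ℝ) (W : Matrix (Fin r) (Fin m) ℝ),
        (∀ i j, 0 ≤ A i j) ∧ (∀ i j, 0 ≤ W i j) ∧ M = A * W) ↔
    (∀ (U : Matrix (Fin n) (Fin r) ℝ) (V : Matrix (Fin m) (Fin r) ℝ),
        LinearIndependent ℝ Uᵀ →
        Submodule.span ℝ (Set.range Uᵀ) = Submodule.span ℝ (Set.range Mᵀ) →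
        LinearIndependent ℝ Vᵀ →
        Submodule.span ℝ (Set.range Vᵀ) = Submodule.span ℝ (Set.range M) →
        ∀ (M_C : Matrix (Fin r) (Fin m) ℝ) (M_R : Matrix (Fin n) (Fin r) ℝ),
          U * M_C = M → M_R * Vᵀ = M →
          ∃ T_C T_R : Matrix (Fin r) (Fin r) ℝ,
            (∀ i j, 0 ≤ (T_C * M_C) i j) ∧ (∀ i j, 0 ≤ (M_R * T_R) i j) ∧
            M_R * T_R * T_C * M_C = M) := by
  have hfinC : Module.finrank ℝ (Submodule.span ℝ (Set.range Mᵀ)) = r := by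
    change Module.finrank ℝ (Submodule.span ℝ (Set.range M.col)) = r
    rw [← Matrix.rank_eq_finrank_span_cols, hrank]
  have hfinR : Module.finrank ℝ (Submodule.span ℝ (Set.range M)) = r := by
    have h1 : Mᵀ.rank = Module.finrank ℝ (Submodule.span ℝ (Set.range Mᵀᵀ)) :=
      Matrix.rank_eq_finrank_span_cols Mᵀ
    rw [Matrix.transpose_transpose, Matrix.rank_transpose, hrank] at h1
    exact h1.symm
  constructor
  · rintro ⟨A, W, hA, hW, hAW⟩ U V hUli hUspan hVli hVspan M_C M_R hMC hMR
    -- column space of M equals column space of A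
    have hMA : Submodule.span ℝ (Set.range Mᵀ) ≤ Submodule.span ℝ (Set.range Aᵀ) := by
      rw [hAW]; exact span_cols_mul_le A W
    have hfinA : Module.finrank ℝ (Submodule.span ℝ (Set.range Aᵀ)) ≤ r := by
      have h1 := A.rank_le_card_width
      rw [Matrix.rank_eq_finrank_span_cols] at h1
      simp at h1; exact h1
    have hcol : Submodule.span ℝ (Set.range Mᵀ) = Submodule.span ℝ (Set.range Aᵀ) :=
      Submodule.eq_of_le_of_finrank_le hMA (by rw [hfinC]; exact hfinA)
    -- row space of M equals row space of W
    have hMW : Submodule.span ℝ (Set.range M) ≤ Submodule.span ℝ (Set.range W) := by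
      rw [hAW]; exact span_rows_mul_le A W
    have hfinW : Module.finrank ℝ (Submodule.span ℝ (Set.range W)) ≤ r := by
      have h1 := Wᵀ.rank_le_card_width
      rw [Matrix.rank_eq_finrank_span_cols] at h1
      simp at h1; exact h1
    have hrow : Submodule.span ℝ (Set.range M) = Submodule.span ℝ (Set.range W) :=
      Submodule.eq_of_le_of_finrank_le hMW (by rw [hfinR]; exact hfinW)
    -- rows of W lie in the row space of M_C
    have hrowMC : Submodule.span ℝ (Set.range M) ≤ Submodule.span ℝ (Set.range M_C) := by
      rw [← hMC]; exact span_rows_mul_le U M_C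
    -- columns of A lie in the column space of M_R
    have hcolMR : Submodule.span ℝ (Set.range Mᵀ) ≤ Submodule.span ℝ (Set.range M_Rᵀ) := by
      rw [← hMR]; exact span_cols_mul_le M_R Vᵀ
    -- obtain T_C with T_C * M_C = W
    obtain ⟨C, hC⟩ := exists_left_factor M_Cᵀ Wᵀ (by
      intro j
      rw [Matrix.transpose_transpose]
      exact hrowMC (hrow.symm.le (Submodule.subset_span ⟨j, rfl⟩)))
    -- obtain T_R with M_R * T_R = A
    obtain ⟨T_R, hTR⟩ := exists_left_factor M_R A (by
      intro j
      exact hcolMR (hcol.symm.le (Submodule.subset_span ⟨j, rfl⟩)))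
    refine ⟨Cᵀ, T_R, ?_, ?_, ?_⟩
    · have hCC : Cᵀ * M_C = W := by
        have := congrArg Matrix.transpose hC
        rwa [Matrix.transpose_mul, Matrix.transpose_transpose, Matrix.transpose_transpose]
          at this
      rw [hCC]; exact hW
    · rw [hTR]; exact hA
    · have hCC : Cᵀ * M_C = W := by
        have := congrArg Matrix.transpose hC
        rwa [Matrix.transpose_mul, Matrix.transpose_transpose, Matrix.transpose_transpose]
          at this
      rw [Matrix.mul_assoc (M_R * T_R), hTR, hCC, ← hAW]
  · intro h
    -- build U from a basis of the column space
    let b := Module.finBasisOfFinrankEq ℝ (Submodule.span ℝ (Set.range Mᵀ)) hfinC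
    let U : Matrix (Fin n) (Fin r) ℝ := Matrix.of fun i k => (b k : Fin n → ℝ) i
    have hUT : Uᵀ = fun k => ((b k : Fin n → ℝ)) := rfl
    have hUli : LinearIndependent ℝ Uᵀ := by
      rw [hUT]
      exact b.linearIndependent.map' (Submodule.span ℝ (Set.range Mᵀ)).subtype
        (Submodule.ker_subtype _)
    have hUspan : Submodule.span ℝ (Set.range Uᵀ) = Submodule.span ℝ (Set.range Mᵀ) := by
      rw [hUT]
      have : Set.range (fun k => ((b k : Fin n → ℝ))) =
          (Submodule.span ℝ (Set.range Mᵀ)).subtype '' Set.range b := by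
        rw [← Set.range_comp]; rfl
      rw [this, ← Submodule.map_span, b.span_eq, Submodule.map_top, Submodule.range_subtype]
    -- build V from a basis of the row space
    let c := Module.finBasisOfFinrankEq ℝ (Submodule.span ℝ (Set.range M)) hfinR
    let V : Matrix (Fin m) (Fin r) ℝ := Matrix.of fun i k => (c k : Fin m → ℝ) i
    have hVT : Vᵀ = fun k => ((c k : Fin m → ℝ)) := rfl
    have hVli : LinearIndependent ℝ Vᵀ := by
      rw [hVT]
      exact c.linearIndependent.map' (Submodule.span ℝ (Set.range M)).subtype
        (Submodule.ker_subtype _)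
    have hVspan : Submodule.span ℝ (Set.range Vᵀ) = Submodule.span ℝ (Set.range M) := by
      rw [hVT]
      have : Set.range (fun k => ((c k : Fin m → ℝ))) =
          (Submodule.span ℝ (Set.range M)).subtype '' Set.range c := by
        rw [← Set.range_comp]; rfl
      rw [this, ← Submodule.map_span, c.span_eq, Submodule.map_top, Submodule.range_subtype]
    -- obtain M_C and M_R
    obtain ⟨M_C, hMC⟩ := exists_left_factor U M (by
      intro j
      rw [hUspan]
      exact Submodule.subset_span ⟨j, rfl⟩)
    obtain ⟨D, hD⟩ := exists_left_factor V Mᵀ (by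
      intro j
      rw [hVspan, Matrix.transpose_transpose]
      exact Submodule.subset_span ⟨j, rfl⟩)
    have hMR : Dᵀ * Vᵀ = M := by
      have := congrArg Matrix.transpose hD
      rwa [Matrix.transpose_mul, Matrix.transpose_transpose] at this
    obtain ⟨T_C, T_R, h1, h2, h3⟩ := h U V hUli hUspan hVli hVspan M_C Dᵀ hMC hMR
    exact ⟨Dᵀ * T_R, T_C * M_C, h2, h1, by rw [← Matrix.mul_assoc]; exact h3.symm⟩
end

section
/- Let M = A·W where A is a nonnegative n×r real matrix and W is a nonnegative r×m real matrix. Fix on subsets of {1,…,r} of equal size the lexicographic order. Then there exist a nonnegative n×r matrix A' and a nonnegative r×m matrix W' such that M = A·W' and M = A'·W', and moreover: (a) for every i ∈ {1,…,m}, letting U_i be the lexicographically least element of C(A) with M_i ∈ cone(A_{U_i}) (such an element exists), the support of the column W'_i is contained in U_i; and (b) for every j ∈ {1,…,n}, letting V_j be the lexicographically least element of C(W'ᵀ) with (M^j)ᵀ ∈ cone((W'ᵀ)_{V_j}) (such an element exists), the support of the row A'^j is contained in V_j. -/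
open Matrix

/-- `U` indexes a maximal linearly independent set of columns of `A`
(an element of `C(A)`). -/
def MaximalIndepCols {n r : ℕ} (A : Matrix (Fin n) (Fin r) ℝ) (U : Finset (Fin r)) : Prop :=
  LinearIndependent ℝ (fun j : U => (fun i => A i j : Fin n → ℝ)) ∧
    ∀ V : Finset (Fin r), U ⊆ V →
      LinearIndependent ℝ (fun j : V => (fun i => A i j : Fin n → ℝ)) → V = U

/-- `cone(A_U)`: nonnegative combinations of the columns of `A` indexed by `U`. -/
def Cone {n r : ℕ} (A : Matrix (Fin n) (Fin r) ℝ) (U : Finset (Fin r)) : Set (Fin n → ℝ) :=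
  {x | ∃ c : Fin r → ℝ, (∀ i, 0 ≤ c i) ∧ (∀ i ∉ U, c i = 0) ∧ x = A.mulVec c}

/-- `U ⪯ V` in the lexicographic order on finite sets (comparing the increasing
enumerations of the two sets in dictionary order). -/
def FinsetLexLE {r : ℕ} (U V : Finset (Fin r)) : Prop :=
  U = V ∨ List.Lex (· < ·) (U.sort (· ≤ ·)) (V.sort (· ≤ ·))

/-- `U` is the lexicographically least element of `C(A)` with `x ∈ cone(A_U)`. -/
def IsLexLeastBasis {n r : ℕ} (A : Matrix (Fin n) (Fin r) ℝ) (U : Finset (Fin r))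
    (x : Fin n → ℝ) : Prop :=
  MaximalIndepCols A U ∧ x ∈ Cone A U ∧
    ∀ V : Finset (Fin r), MaximalIndepCols A V → x ∈ Cone A V → FinsetLexLE U V

open Classical in
/-- Carathéodory: reduce a nonnegative combination to one with independent support. -/
lemma carath {n r : ℕ} (A : Matrix (Fin n) (Fin r) ℝ) :
    ∀ (k : ℕ) (c : Fin r → ℝ), (∀ i, 0 ≤ c i) →
    (Finset.univ.filter (fun j => c j ≠ 0)).card ≤ k →
    ∃ d : Fin r → ℝ, (∀ i, 0 ≤ d i) ∧ A.mulVec d = A.mulVec c ∧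
      LinearIndependent ℝ
        (fun j : (Finset.univ.filter (fun j => d j ≠ 0) : Finset (Fin r)) =>
          (fun i => A i j : Fin n → ℝ)) := by
  intro k
  induction k with
  | zero =>
    intro c hc hcard
    refine ⟨c, hc, rfl, ?_⟩
    have : (Finset.univ.filter (fun j => c j ≠ 0)) = ∅ := by
      simpa using Finset.card_eq_zero.mp (Nat.le_zero.mp hcard)
    rw [this]
    have : IsEmpty ((∅ : Finset (Fin r)) : Type) := by
      simp [Finset.isEmpty_coe_sort]
      exact ⟨fun x => x.2⟩
    exact linearIndependent_empty_type
  | succ k ih =>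
    intro c hc hcard
    set S := Finset.univ.filter (fun j => c j ≠ 0) with hS
    by_cases hind : LinearIndependent ℝ
        (fun j : (S : Finset (Fin r)) => (fun i => A i j : Fin n → ℝ))
    · exact ⟨c, hc, rfl, hind⟩
    -- get a dependence
    obtain ⟨g, hg0, j₁, hj₁⟩ := Fintype.not_linearIndependent_iff.mp hind
    -- extend g to a vector on Fin r
    set d : Fin r → ℝ := fun j => if h : j ∈ S then g ⟨j, h⟩ else 0 with hd
    have hdS : ∀ j, j ∉ S → d j = 0 := fun j hj => by simp [hd, hj]
    have hmvd : A.mulVec d = 0 := by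
      funext i
      have : ∑ j : S, g j • (fun i => A i j.1) = 0 := hg0
      have h1 : ∑ j : S, g j * A i j.1 = 0 := by
        have := congrFun this i
        simpa using this
      calc A.mulVec d i = ∑ j : Fin r, A i j * d j := rfl
        _ = ∑ j ∈ S, A i j * d j := by
            refine (Finset.sum_subset (Finset.subset_univ S) ?_).symm
            intro j _ hj; rw [hdS j hj, mul_zero]
        _ = ∑ j : S, A i j.1 * d j.1 := (Finset.sum_coe_sort S _).symm
        _ = ∑ j : S, g j * A i j.1 := by
            refine Finset.sum_congr rfl ?_
            intro j _; rw [mul_comm]; congr 1; simp [hd, j.2]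
        _ = 0 := h1
    have hd₁ : d j₁.1 ≠ 0 := by simpa [hd, j₁.2] using hj₁
    -- WLOG there is a positive entry of d (else replace d by -d)
    have key : ∀ e : Fin r → ℝ, (∀ j, j ∉ S → e j = 0) → A.mulVec e = 0 →
        (∃ j, 0 < e j) → ∃ d : Fin r → ℝ, (∀ i, 0 ≤ d i) ∧ A.mulVec d = A.mulVec c ∧
        LinearIndependent ℝ
          (fun j : (Finset.univ.filter (fun j => d j ≠ 0) : Finset (Fin r)) =>
            (fun i => A i j : Fin n → ℝ)) := by
      intro e heS hmve hepos
      set T := Finset.univ.filter (fun j => 0 < e j) with hT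
      have hTne : T.Nonempty := by
        obtain ⟨j, hj⟩ := hepos
        exact ⟨j, by simp [hT, hj]⟩
      obtain ⟨j₀, hj₀T, hj₀min⟩ := Finset.exists_min_image T (fun j => c j / e j) hTne
      have hej₀ : 0 < e j₀ := by simpa [hT] using hj₀T
      set t := c j₀ / e j₀ with ht
      have ht0 : 0 ≤ t := div_nonneg (hc j₀) hej₀.le
      set c' : Fin r → ℝ := fun j => c j - t * e j with hc'
      have hc'0 : ∀ j, 0 ≤ c' j := by
        intro j
        by_cases hje : 0 < e j
        · have : t ≤ c j / e j := hj₀min j (by simp [hT, hje])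
          have := (le_div_iff₀ hje).mp this
          simp [hc']; linarith
        · push_neg at hje
          have : t * e j ≤ 0 := mul_nonpos_of_nonneg_of_nonpos ht0 hje
          have := hc j
          simp [hc']; linarith
      have hmvc' : A.mulVec c' = A.mulVec c := by
        have : c' = c - t • e := by funext j; simp [hc', smul_eq_mul]
        rw [this, Matrix.mulVec_sub, Matrix.mulVec_smul, hmve, smul_zero, sub_zero]
      have hsub : Finset.univ.filter (fun j => c' j ≠ 0) ⊆ S.erase j₀ := by
        intro j hj
        simp only [Finset.mem_filter, Finset.mem_univ, true_and] at hj
        refine Finset.mem_erase.mpr ⟨?_, ?_⟩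
        · rintro rfl
          apply hj
          simp [hc', ht]
          field_simp; ring
        · by_contra hjS
          apply hj
          have hcj : c j = 0 := by
            by_contra h; exact hjS (by simp [hS, h])
          have hej : e j = 0 := heS j hjS
          simp [hc', hcj, hej]
      have hj₀S : j₀ ∈ S := by
        by_contra h
        exact absurd (heS j₀ h) hej₀.ne'
      have hcard' : (Finset.univ.filter (fun j => c' j ≠ 0)).card ≤ k := by
        calc (Finset.univ.filter (fun j => c' j ≠ 0)).card
            ≤ (S.erase j₀).card := Finset.card_le_card hsub
          _ = S.card - 1 := Finset.card_erase_of_mem hj₀S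
          _ ≤ k := by omega
      obtain ⟨d, hd0, hmvd', hdind⟩ := ih c' hc'0 hcard'
      exact ⟨d, hd0, by rw [hmvd', hmvc'], hdind⟩
    by_cases hpos : ∃ j, 0 < d j
    · exact key d hdS hmvd hpos
    · push_neg at hpos
      refine key (-d) (fun j hj => by simp [hdS j hj]) (by rw [Matrix.mulVec_neg, hmvd, neg_zero]) ?_
      refine ⟨j₁.1, ?_⟩
      have := hpos j₁.1
      simp only [Pi.neg_apply]
      cases lt_or_eq_of_le this with
      | inl h => linarith
      | inr h => exact absurd h hd₁

open Classical in
lemma exists_maximal_ext {n r : ℕ} (A : Matrix (Fin n) (Fin r) ℝ) (S : Finset (Fin r))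
    (hS : LinearIndependent ℝ (fun j : S => (fun i => A i j : Fin n → ℝ))) :
    ∃ U : Finset (Fin r), S ⊆ U ∧ MaximalIndepCols A U := by
  set 𝒮 := Finset.univ.filter (fun V : Finset (Fin r) =>
    S ⊆ V ∧ LinearIndependent ℝ (fun j : V => (fun i => A i j : Fin n → ℝ))) with h𝒮
  have hne : 𝒮.Nonempty := ⟨S, by simp [h𝒮, hS]⟩
  obtain ⟨U, hU, hUmax⟩ := Finset.exists_max_image 𝒮 Finset.card hne
  simp only [h𝒮, Finset.mem_filter, Finset.mem_univ, true_and] at hU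
  refine ⟨U, hU.1, hU.2, ?_⟩
  intro V hUV hVind
  have hSV : S ⊆ V := hU.1.trans hUV
  have : V.card ≤ U.card := hUmax V (by simp [h𝒮, hSV, hVind])
  exact (Finset.eq_of_subset_of_card_le hUV this).symm

open Classical in
lemma exists_lexLeast {n r : ℕ} (A : Matrix (Fin n) (Fin r) ℝ) (x : Fin n → ℝ)
    (c : Fin r → ℝ) (hc : ∀ i, 0 ≤ c i) (hx : x = A.mulVec c) :
    ∃ U : Finset (Fin r), IsLexLeastBasis A U x := by
  -- first get some element of C(A) whose cone contains x
  obtain ⟨d, hd0, hmv, hind⟩ := carath A (Finset.univ.filter (fun j => c j ≠ 0)).card c hc le_rfl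
  set S := Finset.univ.filter (fun j => d j ≠ 0) with hSdef
  obtain ⟨U₀, hSU₀, hU₀⟩ := exists_maximal_ext A S hind
  have hxU₀ : x ∈ Cone A U₀ := by
    refine ⟨d, hd0, ?_, by rw [hx, hmv]⟩
    intro i hi
    by_contra h
    exact hi (hSU₀ (by simp [hSdef, h]))
  -- the candidate set
  set 𝒞 := Finset.univ.filter (fun V : Finset (Fin r) =>
    MaximalIndepCols A V ∧ x ∈ Cone A V) with h𝒞
  have hne : 𝒞.Nonempty := ⟨U₀, by simp [h𝒞, hU₀, hxU₀]⟩
  obtain ⟨U, hU, hUmin⟩ := Finset.exists_min_image 𝒞 (fun V => V.sort (· ≤ ·)) hne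
  simp only [h𝒞, Finset.mem_filter, Finset.mem_univ, true_and] at hU
  refine ⟨U, hU.1, hU.2, ?_⟩
  intro V hV hxV
  have hle : U.sort (· ≤ ·) ≤ V.sort (· ≤ ·) := hUmin V (by simp [h𝒞, hV, hxV])
  rcases lt_or_eq_of_le hle with h | h
  · exact Or.inr h
  · left
    have h1 := Finset.sort_toFinset U (· ≤ ·)
    have h2 := Finset.sort_toFinset V (· ≤ ·)
    rw [← h1, ← h2, h]

/-- Existence of a proper chain: given a nonnegative factorization
`M = A * W`, there are nonnegative `A'`, `W'` with `M = A * W'` and `M = A' * W'`, where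
each column of `W'` is supported on the lexicographically least minimal basis (in `C(A)`)
for the corresponding column of `M`, and each row of `A'` is supported on the
lexicographically least minimal basis (in `C(W'ᵀ)`) for the corresponding row of `M`. -/
theorem stmt3 {n m r : ℕ} (M : Matrix (Fin n) (Fin m) ℝ)
    (A : Matrix (Fin n) (Fin r) ℝ) (W : Matrix (Fin r) (Fin m) ℝ)
    (hA : ∀ i j, 0 ≤ A i j) (hW : ∀ i j, 0 ≤ W i j) (hM : M = A * W) :
    ∃ (A' : Matrix (Fin n) (Fin r) ℝ) (W' : Matrix (Fin r) (Fin m) ℝ),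
      (∀ i j, 0 ≤ A' i j) ∧ (∀ i j, 0 ≤ W' i j) ∧
      M = A * W' ∧ M = A' * W' ∧
      (∀ i : Fin m, ∃ U : Finset (Fin r),
        IsLexLeastBasis A U (fun l => M l i) ∧
        ∀ t : Fin r, W' t i ≠ 0 → t ∈ U) ∧
      (∀ j : Fin n, ∃ V : Finset (Fin r),
        IsLexLeastBasis W'ᵀ V (fun l => M j l) ∧
        ∀ t : Fin r, A' j t ≠ 0 → t ∈ V) := by
  -- columns
  have hcols : ∀ i : Fin m, ∃ U, IsLexLeastBasis A U (fun l => M l i) := by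
    intro i
    refine exists_lexLeast A _ (fun t => W t i) (fun t => hW t i) ?_
    funext l
    simp [hM, Matrix.mul_apply, Matrix.mulVec, dotProduct]
  choose U hU using hcols
  have hcone := fun i => (hU i).2.1
  choose c hc0 hcsupp hcmv using hcone
  set W' : Matrix (Fin r) (Fin m) ℝ := fun t i => c i t with hW'
  have hW'0 : ∀ t i, 0 ≤ W' t i := fun t i => hc0 i t
  have hMW' : M = A * W' := by
    ext l i
    have := congrFun (hcmv i) l
    exact this
  -- rows
  have hrows : ∀ j : Fin n, ∃ V, IsLexLeastBasis W'ᵀ V (fun l => M j l) := by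
    intro j
    refine exists_lexLeast W'ᵀ _ (fun t => A j t) (fun t => hA j t) ?_
    funext l
    simp [hMW', Matrix.mul_apply, Matrix.mulVec, dotProduct, Matrix.transpose_apply,
      mul_comm]
  choose V hV using hrows
  have hcone2 := fun j => (hV j).2.1
  choose e he0 hesupp hemv using hcone2
  set A' : Matrix (Fin n) (Fin r) ℝ := fun j t => e j t with hA'
  refine ⟨A', W', fun j t => he0 j t, hW'0, hMW', ?_, ?_, ?_⟩
  · ext j l
    have := congrFun (hemv j) l
    rw [this, Matrix.mul_apply]
    simp only [Matrix.mulVec, dotProduct, Matrix.transpose_apply]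
    exact Finset.sum_congr rfl fun _ _ => mul_comm _ _
  · intro i
    refine ⟨U i, hU i, ?_⟩
    intro t ht
    by_contra h
    exact ht (hcsupp i t h)
  · intro j
    refine ⟨V j, hV j, ?_⟩
    intro t ht
    by_contra h
    exact ht (hesupp j t h)
end

section
/- If a nonnegative n×m real matrix M has a factorization M = A·W where A is a nonnegative n×r matrix, W is a nonnegative r×m matrix, and A is separable, then there exist an integer r' ≤ r, a nonnegative n×r' matrix A' and a nonnegative r'×m matrix W' such that M = A'·W', A' is separable, and W' is simplicial. -/
open Matrix

/-- A nonnegative matrix `A` is separable if for every column index `i` there is a row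
of `A` whose only nonzero entry lies in column `i`. -/
def Separable {n r : ℕ} (A : Matrix (Fin n) (Fin r) ℝ) : Prop :=
  ∀ i : Fin r, ∃ j : Fin n, A j i ≠ 0 ∧ ∀ i' : Fin r, i' ≠ i → A j i' = 0

/-- A nonnegative matrix `W` is simplicial if no row of `W` lies in the convex hull of
the remaining rows. -/
def Simplicial {r m : ℕ} (W : Matrix (Fin r) (Fin m) ℝ) : Prop :=
  ∀ t : Fin r, W t ∉ convexHull ℝ (W '' {t' | t' ≠ t})

theorem stmt8aux (r : ℕ) : ∀ {n m : ℕ} (M : Matrix (Fin n) (Fin m) ℝ),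
    (∀ i j, 0 ≤ M i j) → ∀ (A : Matrix (Fin n) (Fin r) ℝ) (W : Matrix (Fin r) (Fin m) ℝ),
    (∀ i j, 0 ≤ A i j) → (∀ i j, 0 ≤ W i j) →
    M = A * W → Separable A →
    ∃ (r' : ℕ) (A' : Matrix (Fin n) (Fin r') ℝ) (W' : Matrix (Fin r') (Fin m) ℝ),
      r' ≤ r ∧ (∀ i j, 0 ≤ A' i j) ∧ (∀ i j, 0 ≤ W' i j) ∧
      M = A' * W' ∧ Separable A' ∧ Simplicial W' := by
  induction r using Nat.strong_induction_on with
  | _ r ih =>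
  intro n m M hM A W hA hW hfac hsep
  by_cases hs : Simplicial W
  · exact ⟨r, A, W, le_refl r, hA, hW, hfac, hsep, hs⟩
  · simp only [Simplicial, not_forall, not_not] at hs
    obtain ⟨t, ht⟩ := hs
    obtain ⟨k, rfl⟩ : ∃ k, r = k + 1 := ⟨r - 1, (Nat.succ_pred_eq_of_pos t.pos).symm⟩
    rw [mem_convexHull_iff_exists_fintype] at ht
    obtain ⟨ι, _, w, z, hw0, hw1, hz, hx⟩ := ht
    choose g hg hgz using fun i => (hz i : z i ∈ W '' {t' | t' ≠ t})
    set c : Fin (k+1) → ℝ := fun t' => ∑ i ∈ Finset.univ.filter (fun i => g i = t'), w i with hc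
    have hc0 : ∀ t', 0 ≤ c t' := fun t' => Finset.sum_nonneg fun i _ => hw0 i
    have hct : c t = 0 := by
      apply Finset.sum_eq_zero
      intro i hi
      simp only [Finset.mem_filter] at hi
      exact absurd hi.2 (hg i)
    have hWt : ∀ l, W t l = ∑ t', c t' * W t' l := by
      intro l
      have h1 : ∑ x : ι, w x * z x l = W t l := by
        have := congrFun hx l
        simpa only [Finset.sum_apply, Pi.smul_apply, smul_eq_mul] using this
      rw [← h1]
      rw [← Finset.sum_fiberwise Finset.univ g (fun x => w x * z x l)]
      refine Finset.sum_congr rfl fun t' _ => ?_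
      rw [hc, Finset.sum_mul]
      refine Finset.sum_congr rfl fun i hi => ?_
      simp only [Finset.mem_filter] at hi
      rw [← hgz i, hi.2]
    -- new matrices
    set A' : Matrix (Fin n) (Fin k) ℝ :=
      fun j i => A j (t.succAbove i) + c (t.succAbove i) * A j t with hA'
    set W' : Matrix (Fin k) (Fin m) ℝ := fun i l => W (t.succAbove i) l with hW'
    have hA'0 : ∀ i j, 0 ≤ A' i j := fun i j =>
      add_nonneg (hA _ _) (mul_nonneg (hc0 _) (hA _ _))
    have hW'0 : ∀ i j, 0 ≤ W' i j := fun i j => hW _ _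
    have hfac' : M = A' * W' := by
      rw [hfac]
      ext j l
      simp only [mul_apply, hA', hW']
      rw [Fin.sum_univ_succAbove (fun i => A j i * W i l) t]
      rw [hWt l, Finset.mul_sum,
        Fin.sum_univ_succAbove (fun t' => A j t * (c t' * W t' l)) t, hct]
      ring_nf
      rw [← Finset.sum_add_distrib]
      refine Finset.sum_congr rfl fun i _ => ?_
      ring
    have hsep' : Separable A' := by
      intro i
      obtain ⟨j, hj1, hj2⟩ := hsep (t.succAbove i)
      refine ⟨j, ?_, ?_⟩
      · have hAt : A j t = 0 := hj2 t (Fin.succAbove_ne t i).symm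
        simp [hA', hAt, hj1]
      · intro i' hi'
        have h1 : A j (t.succAbove i') = 0 :=
          hj2 _ (fun h => hi' (t.succAbove_right_injective h))
        have hAt : A j t = 0 := hj2 t (Fin.succAbove_ne t i).symm
        simp [hA', h1, hAt]
    obtain ⟨r', A'', W'', hle, h1, h2, h3, h4, h5⟩ :=
      ih k (Nat.lt_succ_self k) M hM A' W' hA'0 hW'0 hfac' hsep'
    exact ⟨r', A'', W'', hle.trans (Nat.le_succ k), h1, h2, h3, h4, h5⟩

/-- If a nonnegative matrix `M` has a separable nonnegative
factorization of inner dimension `r`, then it has one of inner dimension `r' ≤ r` in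
which the first factor is separable and the second factor is simplicial. -/
theorem stmt8 {n m r : ℕ} (M : Matrix (Fin n) (Fin m) ℝ) (hM : ∀ i j, 0 ≤ M i j)
    (A : Matrix (Fin n) (Fin r) ℝ) (W : Matrix (Fin r) (Fin m) ℝ)
    (hA : ∀ i j, 0 ≤ A i j) (hW : ∀ i j, 0 ≤ W i j)
    (hfac : M = A * W) (hsep : Separable A) :
    ∃ (r' : ℕ) (A' : Matrix (Fin n) (Fin r') ℝ) (W' : Matrix (Fin r') (Fin m) ℝ),
      r' ≤ r ∧ (∀ i j, 0 ≤ A' i j) ∧ (∀ i j, 0 ≤ W' i j) ∧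
      M = A' * W' ∧ Separable A' ∧ Simplicial W' :=
  stmt8aux r M hM A W hA hW hfac hsep
end

section
/- Let M = A·W where A is a nonnegative n×r real matrix, W is a nonnegative r×m real matrix, every row of M, every row of A, and every row of W has ℓ1 norm equal to 1, A is separable, and W is simplicial. Call a row M^j a loner if M^j does not lie in the convex hull of the set of rows { M^{j'} : j' ∈ {1,…,n}, M^{j'} ≠ M^j }. Then a row M^j is a loner if and only if M^j = W^i for some i ∈ {1,…,r}. -/
open Matrix

/-- Under separability of `A` and the simplicial condition on `W`
(all rows normalized in `ℓ1` norm), a row `M^j` of `M = A * W` is a loner — i.e. it is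
not in the convex hull of the rows of `M` different from it (as vectors) — if and only
if `M^j` equals some row `W^i` of `W`. -/
theorem stmt10 {n m r : ℕ} (M : Matrix (Fin n) (Fin m) ℝ)
    (A : Matrix (Fin n) (Fin r) ℝ) (W : Matrix (Fin r) (Fin m) ℝ)
    (hA : ∀ i j, 0 ≤ A i j) (hW : ∀ i j, 0 ≤ W i j) (hfac : M = A * W)
    (hMrow : ∀ j : Fin n, ∑ l, |M j l| = 1)
    (hArow : ∀ j : Fin n, ∑ t, |A j t| = 1)
    (hWrow : ∀ t : Fin r, ∑ l, |W t l| = 1)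
    (hsep : Separable A) (hsimp : Simplicial W) :
    ∀ j : Fin n,
      (M j ∉ convexHull ℝ (M '' {j' | M j' ≠ M j})) ↔ ∃ i : Fin r, M j = W i := by
  classical
  have hAsum : ∀ j, ∑ t, A j t = 1 := fun j => by
    rw [← hArow j]
    exact Finset.sum_congr rfl fun t _ => (abs_of_nonneg (hA j t)).symm
  have hMrepr : ∀ j, M j = ∑ t, A j t • W t := fun j => by
    funext l
    rw [hfac]
    simp [Matrix.mul_apply, Finset.sum_apply]
  have hWrowM : ∀ i : Fin r, ∃ j : Fin n, M j = W i := by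
    intro i
    obtain ⟨j, hji, hj0⟩ := hsep i
    refine ⟨j, ?_⟩
    have h1 : A j i = 1 := by
      have h := hAsum j
      rwa [Finset.sum_eq_single i (fun t _ ht => hj0 t ht) (by simp)] at h
    rw [hMrepr j,
      Finset.sum_eq_single i (fun t _ ht => by rw [hj0 t ht]; simp) (by simp), h1, one_smul]
  intro j
  constructor
  · intro hlone
    by_contra hne
    push_neg at hne
    apply hlone
    rw [hMrepr j]
    apply (convex_convexHull ℝ _).sum_mem (fun t _ => hA j t) (hAsum j)
    intro t _
    obtain ⟨j', hj'⟩ := hWrowM t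
    exact subset_convexHull ℝ _
      ⟨j', by rw [Set.mem_setOf_eq, hj']; exact fun h => hne t ((hMrepr j).trans h.symm), hj'⟩
  · rintro ⟨i0, hMj⟩ hmem
    rw [mem_convexHull_iff_exists_fintype] at hmem
    obtain ⟨ι, _inst, w, z, hw0, hw1, hzS, hsum⟩ := hmem
    have hz : ∀ k : ι, ∃ j', M j' ≠ M j ∧ M j' = z k := by
      intro k
      obtain ⟨j', hj'1, hj'2⟩ := hzS k
      exact ⟨j', hj'1, hj'2⟩
    choose g hg1 hg2 using hz
    set b : Fin r → ℝ := fun t => ∑ k, w k * A (g k) t with hb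
    have hb0 : ∀ t, 0 ≤ b t := fun t =>
      Finset.sum_nonneg fun k _ => mul_nonneg (hw0 k) (hA _ t)
    have hbsum : ∑ t, b t = 1 := by
      rw [hb]
      simp only []
      rw [Finset.sum_comm]
      calc ∑ k, ∑ t, w k * A (g k) t = ∑ k : ι, w k := by
            refine Finset.sum_congr rfl fun k _ => ?_
            rw [← Finset.mul_sum, hAsum (g k), mul_one]
        _ = 1 := hw1
    have hrepr : M j = ∑ t, b t • W t := by
      funext l
      have h1 : M j l = ∑ k, w k * M (g k) l := by
        rw [← hsum]
        simp only [Finset.sum_apply, Pi.smul_apply, smul_eq_mul]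
        exact Finset.sum_congr rfl fun k _ => by rw [hg2 k]
      rw [h1]
      simp only [Finset.sum_apply, Pi.smul_apply, smul_eq_mul, hb]
      have h2 : ∀ k, w k * M (g k) l = ∑ t, w k * (A (g k) t * W t l) := fun k => by
        rw [hfac]; simp [Matrix.mul_apply, Finset.mul_sum]
      simp only [h2]
      rw [Finset.sum_comm]
      refine Finset.sum_congr rfl fun t _ => ?_
      rw [Finset.sum_mul]
      exact Finset.sum_congr rfl fun k _ => by ring
    have hK : b i0 = 1 := by
      by_contra hne1
      have hle : b i0 ≤ 1 := by
        rw [← hbsum]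
        exact Finset.single_le_sum (fun t _ => hb0 t) (Finset.mem_univ i0)
      have hlt : b i0 < 1 := lt_of_le_of_ne hle hne1
      have hs : (0:ℝ) < 1 - b i0 := by linarith
      apply hsimp i0
      have h2 : W i0 = b i0 • W i0 + ∑ t ∈ Finset.univ.erase i0, b t • W t := by
        rw [Finset.add_sum_erase Finset.univ (fun t => b t • W t) (Finset.mem_univ i0), ← hrepr, hMj]
      have h3 : W i0 = ∑ t ∈ Finset.univ.erase i0, (b t / (1 - b i0)) • W t := by
        have h4 : (1 - b i0) • W i0 = ∑ t ∈ Finset.univ.erase i0, b t • W t := by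
          rw [sub_smul, one_smul, sub_eq_iff_eq_add']
          exact h2
        calc W i0 = (1 - b i0)⁻¹ • ((1 - b i0) • W i0) := by
              rw [smul_smul, inv_mul_cancel₀ hs.ne', one_smul]
          _ = ∑ t ∈ Finset.univ.erase i0, (b t / (1 - b i0)) • W t := by
              rw [h4, Finset.smul_sum]
              exact Finset.sum_congr rfl fun t _ => by
                rw [smul_smul, div_eq_inv_mul]
      rw [h3]
      refine (convex_convexHull ℝ _).sum_mem (fun t _ => div_nonneg (hb0 t) hs.le) ?_ ?_
      · rw [← Finset.sum_div]
        have h5 : ∑ t ∈ Finset.univ.erase i0, b t = 1 - b i0 := by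
          have h6 := hbsum
          rw [← Finset.add_sum_erase _ _ (Finset.mem_univ i0)] at h6
          linarith
        rw [h5, div_self hs.ne']
      · intro t ht
        exact subset_convexHull ℝ _ ⟨t, (Finset.mem_erase.mp ht).1, rfl⟩
    obtain ⟨k, hk⟩ : ∃ k, w k ≠ 0 := by
      by_contra h
      push_neg at h
      simp [h] at hw1
    have hsum0 : ∑ k', w k' * (1 - A (g k') i0) = 0 := by
      have hbi0 : ∑ k', w k' * A (g k') i0 = 1 := hK
      simp only [mul_sub, mul_one, Finset.sum_sub_distrib, hw1, hbi0, sub_self]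
    have hterm : ∀ k' ∈ Finset.univ, (0:ℝ) ≤ w k' * (1 - A (g k') i0) := by
      intro k' _
      refine mul_nonneg (hw0 k') ?_
      have h7 : A (g k') i0 ≤ ∑ t, A (g k') t :=
        Finset.single_le_sum (fun t _ => hA _ t) (Finset.mem_univ i0)
      rw [hAsum (g k')] at h7
      linarith
    have hz0 := (Finset.sum_eq_zero_iff_of_nonneg hterm).mp hsum0 k (Finset.mem_univ k)
    have hAk1 : A (g k) i0 = 1 := by
      rcases mul_eq_zero.mp hz0 with h | h
      · exact absurd h hk
      · linarith
    have hrow0 : ∀ t, t ≠ i0 → A (g k) t = 0 := by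
      intro t ht
      have hs0 : ∑ t' ∈ Finset.univ.erase i0, A (g k) t' = 0 := by
        have h8 := hAsum (g k)
        rw [← Finset.add_sum_erase _ _ (Finset.mem_univ i0), hAk1] at h8
        linarith
      exact (Finset.sum_eq_zero_iff_of_nonneg (fun t' _ => hA _ t')).mp hs0 t
        (Finset.mem_erase.mpr ⟨ht, Finset.mem_univ t⟩)
    have hMgk : M (g k) = W i0 := by
      rw [hMrepr (g k),
        Finset.sum_eq_single i0 (fun t _ ht => by rw [hrow0 t ht]; simp) (by simp), hAk1, one_smul]
    exact hg1 k (hMgk.trans hMj.symm)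
end

section
/- Let M = A·W where A is a nonnegative n×r real matrix whose rows each have ℓ1 norm 1 and W is a nonnegative r×m real matrix, and suppose A is separable with witness f : {1,…,r} → {1,…,n}, meaning that for each i the row A^{f(i)} has its only nonzero entry in column i. Then M^{f(i)} = W^i for every i ∈ {1,…,r}, and every row of M lies in the convex hull of the rows M^{f(1)}, …, M^{f(r)}; indeed, M^j = Σ_{k=1}^r A_{j,k} · M^{f(k)} with A_{j,k} ≥ 0 and Σ_{k=1}^r A_{j,k} = 1. -/
open Matrix

/-- If `M = A * W`, `A` nonnegative with unit `ℓ1`-norm rows and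
separable with witness `f`, and `W` nonnegative, then the canonical rows of `M` are the
rows of `W`, and every row of `M` is the explicit convex combination
`M^j = Σ_k A_{j,k} • M^{f(k)}` of the canonical rows; in particular each row of `M` lies
in the convex hull of the canonical rows. -/
theorem stmt11 {n m r : ℕ} (M : Matrix (Fin n) (Fin m) ℝ)
    (A : Matrix (Fin n) (Fin r) ℝ) (W : Matrix (Fin r) (Fin m) ℝ)
    (hA : ∀ i j, 0 ≤ A i j) (hArow : ∀ j : Fin n, ∑ t, |A j t| = 1)
    (hW : ∀ i j, 0 ≤ W i j) (hfac : M = A * W)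
    (f : Fin r → Fin n)
    (hwit : ∀ i : Fin r, A (f i) i ≠ 0 ∧ ∀ i' : Fin r, i' ≠ i → A (f i) i' = 0) :
    (∀ i : Fin r, M (f i) = W i) ∧
    (∀ j : Fin n,
      M j = ∑ t, A j t • M (f t) ∧ (∀ t, 0 ≤ A j t) ∧ (∑ t, A j t = 1) ∧
      M j ∈ convexHull ℝ (Set.range fun i : Fin r => M (f i))) := by
  have hsum : ∀ j : Fin n, ∑ t, A j t = 1 := by
    intro j
    rw [← hArow j]
    exact Finset.sum_congr rfl fun t _ => (abs_of_nonneg (hA j t)).symm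
  have hone : ∀ i : Fin r, A (f i) i = 1 := by
    intro i
    have := hsum (f i)
    rwa [Finset.sum_eq_single i (fun t _ ht => (hwit i).2 t ht) (by simp)] at this
  have hcanon : ∀ i : Fin r, M (f i) = W i := by
    intro i
    funext c
    rw [hfac]
    simp only [Matrix.mul_apply]
    rw [Finset.sum_eq_single i (fun t _ ht => by rw [(hwit i).2 t ht, zero_mul])
      (by simp), hone i, one_mul]
  refine ⟨hcanon, fun j => ?_⟩
  have hrow : M j = ∑ t, A j t • M (f t) := by
    funext c
    have h1 : M j c = ∑ t, A j t * W t c := by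
      rw [hfac]; simp [Matrix.mul_apply]
    rw [h1]
    simp only [Finset.sum_apply, Pi.smul_apply, smul_eq_mul]
    exact Finset.sum_congr rfl fun t _ => by rw [hcanon t]
  refine ⟨hrow, fun t => hA j t, hsum j, ?_⟩
  rw [hrow]
  exact (convex_convexHull ℝ _).sum_mem (fun t _ => hA j t) (hsum j)
    (fun t _ => subset_convexHull ℝ _ (Set.mem_range_self t))
end

section
/- Let M = A·W where A is a nonnegative n×r real matrix whose rows each have ℓ1 norm 1 and W is a nonnegative r×m real matrix, and suppose A is separable with witness f : {1,…,r} → {1,…,n}, meaning that for each i the row A^{f(i)} has its only nonzero entry in column i. Let ε ≥ 0 and let M' be an n×m real matrix with ‖M'^j − M^j‖₁ ≤ ε for every j ∈ {1,…,n}. Then for every j ∈ {1,…,n}: ‖M'^j − Σ_{k=1}^r A_{j,k} · M'^{f(k)}‖₁ ≤ 2ε; in particular, every row of M' has ℓ1 distance at most 2ε to the convex hull of the canonical rows M'^{f(1)}, …, M'^{f(r)}. -/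
open Matrix

/-- The `ℓ1` norm of a vector: the sum of the absolute values of its entries. -/
def l1norm {m : ℕ} (x : Fin m → ℝ) : ℝ := ∑ l, |x l|

/-- If `M = A * W` with `A` nonnegative, unit `ℓ1`-norm rows and
separable with witness `f`, `W` nonnegative, and `M'` is an entrywise row-ℓ1
`ε`-perturbation of `M`, then every row of `M'` is within `ℓ1` distance `2ε` of the
explicit convex combination `Σ_k A_{j,k} • M'^{f(k)}` of the canonical rows of `M'`; in
particular every row of `M'` has `ℓ1` distance at most `2ε` to the convex hull of the
canonical rows. -/
theorem stmt12 {n m r : ℕ} (M : Matrix (Fin n) (Fin m) ℝ)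
    (A : Matrix (Fin n) (Fin r) ℝ) (W : Matrix (Fin r) (Fin m) ℝ)
    (hA : ∀ i j, 0 ≤ A i j) (hArow : ∀ j : Fin n, ∑ t, |A j t| = 1)
    (hW : ∀ i j, 0 ≤ W i j) (hfac : M = A * W)
    (f : Fin r → Fin n)
    (hwit : ∀ i : Fin r, A (f i) i ≠ 0 ∧ ∀ i' : Fin r, i' ≠ i → A (f i) i' = 0)
    (ε : ℝ) (hε : 0 ≤ ε)
    (M' : Matrix (Fin n) (Fin m) ℝ)
    (hM' : ∀ j : Fin n, l1norm (M' j - M j) ≤ ε) :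
    ∀ j : Fin n,
      l1norm (M' j - ∑ t, A j t • M' (f t)) ≤ 2 * ε ∧
      ∃ y ∈ convexHull ℝ (Set.range fun i : Fin r => M' (f i)),
        l1norm (M' j - y) ≤ 2 * ε := by
  intro j
  have hAj1 : ∑ t, A j t = 1 := by
    have h := hArow j
    simpa [abs_of_nonneg (hA j _)] using h
  have hAft : ∀ t : Fin r, A (f t) t = 1 := by
    intro t
    have h := hArow (f t)
    rw [Finset.sum_eq_single t] at h
    · rwa [abs_of_nonneg (hA _ _)] at h
    · intro b _ hb; rw [(hwit t).2 b hb, abs_zero]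
    · intro h'; exact absurd (Finset.mem_univ t) h'
  have hMft : ∀ (t : Fin r) (l : Fin m), M (f t) l = W t l := by
    intro t l
    rw [hfac, Matrix.mul_apply, Finset.sum_eq_single t]
    · rw [hAft t, one_mul]
    · intro b _ hb; rw [(hwit t).2 b hb, zero_mul]
    · intro h'; exact absurd (Finset.mem_univ t) h'
  have hMj : ∀ l : Fin m, M j l = ∑ t, A j t * M (f t) l := by
    intro l
    conv_lhs => rw [hfac]
    rw [Matrix.mul_apply]
    exact Finset.sum_congr rfl fun t _ => by rw [hMft t l]
  have key : l1norm (M' j - ∑ t, A j t • M' (f t)) ≤ 2 * ε := by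
    unfold l1norm
    have heq : ∀ l : Fin m, (M' j - ∑ t, A j t • M' (f t)) l
        = (M' j l - M j l) + ∑ t, A j t * (M (f t) l - M' (f t) l) := by
      intro l
      simp only [Pi.sub_apply, Finset.sum_apply, Pi.smul_apply, smul_eq_mul]
      rw [Finset.sum_congr rfl (fun t _ => mul_sub (A j t) (M (f t) l) (M' (f t) l)),
        Finset.sum_sub_distrib, ← hMj l]
      ring
    calc ∑ l, |(M' j - ∑ t, A j t • M' (f t)) l|
        ≤ ∑ l, (|M' j l - M j l| + ∑ t, A j t * |M (f t) l - M' (f t) l|) := by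
          apply Finset.sum_le_sum
          intro l _
          rw [heq l]
          refine le_trans (abs_add_le _ _) (add_le_add le_rfl ?_)
          refine le_trans (Finset.abs_sum_le_sum_abs _ _) ?_
          apply Finset.sum_le_sum
          intro t _
          rw [abs_mul, abs_of_nonneg (hA j t)]
      _ = (∑ l, |M' j l - M j l|) + ∑ t, A j t * ∑ l, |M (f t) l - M' (f t) l| := by
          rw [Finset.sum_add_distrib, Finset.sum_comm]
          congr 1
          exact Finset.sum_congr rfl fun t _ => (Finset.mul_sum _ _ _).symm
      _ ≤ ε + ∑ t, A j t * ε := by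
          refine add_le_add ?_ ?_
          · have := hM' j
            unfold l1norm at this
            simpa using this
          · apply Finset.sum_le_sum
            intro t _
            refine mul_le_mul_of_nonneg_left ?_ (hA j t)
            have := hM' (f t)
            unfold l1norm at this
            calc ∑ l, |M (f t) l - M' (f t) l| = ∑ l, |M' (f t) l - M (f t) l| :=
                  Finset.sum_congr rfl fun l _ => abs_sub_comm _ _
              _ ≤ ε := by simpa using this
      _ = 2 * ε := by rw [← Finset.sum_mul, hAj1]; ring
  refine ⟨key, ∑ t, A j t • M' (f t), ?_, key⟩
  have hmem := Finset.centerMass_mem_convexHull (t := Finset.univ)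
    (w := fun t : Fin r => A j t) (z := fun t : Fin r => M' (f t))
    (fun t _ => hA j t) (by rw [hAj1]; norm_num)
    (fun t _ => Set.mem_range_self t)
  rwa [Finset.centerMass_eq_of_sum_1 _ _ hAj1] at hmem
end

section
/- Let M = A·W where A is a nonnegative n×r real matrix whose rows each have ℓ1 norm 1, W is a nonnegative r×m real matrix, and A is separable with witness f : {1,…,r} → {1,…,n}, meaning that for each i the row A^{f(i)} has its only nonzero entry in column i. Let ε ≥ 0, α > 0, set d = 5ε/α + 2ε, and let M' be an n×m real matrix with ‖M'^j − M^j‖₁ ≤ ε for every j. Call a row M'^j a robust-loner if the ℓ1 distance from M'^j to the convex hull of the rows { M'^{j'} : ‖M'^{j'} − M'^j‖₁ ≥ d } is strictly greater than 2ε. Then for any j ∈ {1,…,n}: if ‖M'^j − W^i‖₁ > d + ε for every i ∈ {1,…,r}, then M'^j is not a robust-loner. -/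
open Matrix

lemma l1norm_sub_comm {m : ℕ} (a b : Fin m → ℝ) : l1norm (a - b) = l1norm (b - a) := by
  unfold l1norm
  exact Finset.sum_congr rfl fun k _ => by simp [abs_sub_comm]

lemma l1norm_tri {m : ℕ} (a b c : Fin m → ℝ) :
    l1norm (a - c) ≤ l1norm (a - b) + l1norm (b - c) := by
  unfold l1norm
  rw [← Finset.sum_add_distrib]
  exact Finset.sum_le_sum fun k _ => by simpa using abs_sub_le (a k) (b k) (c k)

/-- With `M = A * W` (`A` nonnegative, unit `ℓ1`-norm rows, separable
with witness `f`, `W` nonnegative), `ε ≥ 0`, `α > 0`, `d = 5ε/α + 2ε` and `M'` a row-ℓ1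
`ε`-perturbation of `M`: a row `M'^j` whose `ℓ1` distance to each row `W^i` exceeds
`d + ε` is not a robust-loner, i.e. it is not at `ℓ1` distance greater than `2ε` from the
convex hull of the rows of `M'` at `ℓ1` distance at least `d` from `M'^j`. -/
theorem stmt13 {n m r : ℕ} (M : Matrix (Fin n) (Fin m) ℝ)
    (A : Matrix (Fin n) (Fin r) ℝ) (W : Matrix (Fin r) (Fin m) ℝ)
    (hA : ∀ i j, 0 ≤ A i j) (hArow : ∀ j : Fin n, ∑ t, |A j t| = 1)
    (hW : ∀ i j, 0 ≤ W i j) (hfac : M = A * W)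
    (f : Fin r → Fin n)
    (hwit : ∀ i : Fin r, A (f i) i ≠ 0 ∧ ∀ i' : Fin r, i' ≠ i → A (f i) i' = 0)
    (ε α : ℝ) (hε : 0 ≤ ε) (hα : 0 < α)
    (M' : Matrix (Fin n) (Fin m) ℝ)
    (hM' : ∀ j : Fin n, l1norm (M' j - M j) ≤ ε)
    (j : Fin n)
    (hfar : ∀ i : Fin r, (5 * ε / α + 2 * ε) + ε < l1norm (M' j - W i)) :
    ¬ (∀ y ∈ convexHull ℝ (M' '' {j' | 5 * ε / α + 2 * ε ≤ l1norm (M' j' - M' j)}),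
        2 * ε < l1norm (M' j - y)) := by
  intro hcon
  have hAsum : ∑ t, A j t = 1 := by
    rw [← hArow j]
    exact Finset.sum_congr rfl fun t _ => (abs_of_nonneg (hA j t)).symm
  have hA1 : ∀ i, A (f i) i = 1 := by
    intro i
    have h := hArow (f i)
    rw [Finset.sum_eq_single i (fun b _ hb => by rw [(hwit i).2 b hb, abs_zero])
      (fun h' => absurd (Finset.mem_univ i) h')] at h
    rwa [abs_of_nonneg (hA _ _)] at h
  have hMW : ∀ i, M (f i) = W i := by
    intro i
    funext k
    rw [hfac]
    show ∑ t, A (f i) t * W t k = W i k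
    rw [Finset.sum_eq_single i (fun b _ hb => by rw [(hwit i).2 b hb, zero_mul])
      (fun h' => absurd (Finset.mem_univ i) h'), hA1 i, one_mul]
  have hMj : ∀ k, M j k = ∑ i, A j i * W i k := by
    intro k
    conv_lhs => rw [hfac]
    rfl
  have hMj' : ∀ k, M j k = ∑ i, A j i * M (f i) k := by
    intro k
    rw [hMj k]
    exact Finset.sum_congr rfl fun i _ => by rw [hMW i]
  -- each f i belongs to the far set
  have hmem : ∀ i, f i ∈ {j' | 5 * ε / α + 2 * ε ≤ l1norm (M' j' - M' j)} := by
    intro i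
    have h1 : l1norm (M' (f i) - W i) ≤ ε := by
      rw [← hMW i]; exact hM' (f i)
    have h2 : l1norm (M' j - W i) ≤ l1norm (M' j - M' (f i)) + l1norm (M' (f i) - W i) :=
      l1norm_tri _ _ _
    have h3 := hfar i
    have : 5 * ε / α + 2 * ε ≤ l1norm (M' j - M' (f i)) := by linarith
    rwa [l1norm_sub_comm] at this
  set y : Fin m → ℝ := ∑ i, A j i • M' (f i) with hy
  have hymem : y ∈ convexHull ℝ (M' '' {j' | 5 * ε / α + 2 * ε ≤ l1norm (M' j' - M' j)}) := by
    apply (convex_convexHull ℝ _).sum_mem (fun i _ => hA j i) hAsum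
    intro i _
    exact subset_convexHull ℝ _ ⟨f i, hmem i, rfl⟩
  have hyk : ∀ k, y k = ∑ i, A j i * M' (f i) k := by
    intro k
    rw [hy]
    simp [Finset.sum_apply]
  have h2 : l1norm (M j - y) ≤ ε := by
    unfold l1norm
    calc ∑ k, |(M j - y) k|
        ≤ ∑ k, ∑ i, A j i * |M (f i) k - M' (f i) k| := by
          apply Finset.sum_le_sum
          intro k _
          have : (M j - y) k = ∑ i, A j i * (M (f i) k - M' (f i) k) := by
            simp only [Pi.sub_apply, hMj' k, hyk k, ← Finset.sum_sub_distrib]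
            exact Finset.sum_congr rfl fun i _ => by ring
          rw [this]
          calc |∑ i, A j i * (M (f i) k - M' (f i) k)|
              ≤ ∑ i, |A j i * (M (f i) k - M' (f i) k)| := Finset.abs_sum_le_sum_abs _ _
            _ = ∑ i, A j i * |M (f i) k - M' (f i) k| := by
                exact Finset.sum_congr rfl fun i _ => by
                  rw [abs_mul, abs_of_nonneg (hA j i)]
      _ = ∑ i, A j i * l1norm (M (f i) - M' (f i)) := by
          rw [Finset.sum_comm]
          exact Finset.sum_congr rfl fun i _ => by
            unfold l1norm
            rw [Finset.mul_sum]
            exact Finset.sum_congr rfl fun k _ => by simp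
      _ ≤ ∑ i, A j i * ε := by
          apply Finset.sum_le_sum
          intro i _
          apply mul_le_mul_of_nonneg_left _ (hA j i)
          rw [l1norm_sub_comm]
          exact hM' (f i)
      _ = ε := by rw [← Finset.sum_mul, hAsum, one_mul]
  have h3 : l1norm (M' j - y) ≤ l1norm (M' j - M j) + l1norm (M j - y) := l1norm_tri _ _ _
  have h4 := hM' j
  have h5 := hcon y hymem
  linarith
end

section
/- Let M = A·W where A is a nonnegative n×r real matrix whose rows each have ℓ1 norm 1, W is a nonnegative r×m real matrix whose rows each have ℓ1 norm 1, A is separable, and W is α-robust simplicial for some α > 0. Let ε ≥ 0 satisfy 20ε/α + 13ε < α, and let M' be an n×m real matrix with ‖M'^j − M^j‖₁ ≤ ε for every j ∈ {1,…,n}. Then there exists a set S ⊆ {1,…,n} with |S| = r such that every row of M' has ℓ1 distance at most 10ε/α + 7ε to the convex hull of { M'^i : i ∈ S }; equivalently, there exist a nonnegative n×r matrix A' whose rows each sum to 1 and an r×m matrix W' each of whose rows is a row of M', such that ‖M'^j − (A'·W')^j‖₁ ≤ 10ε/α + 7ε for every j. -/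
open Matrix

/-- `W` is `α`-robust simplicial: every row of `W` has `ℓ1` distance at least `α` to the
convex hull of the remaining rows. -/
def RobustSimplicial {r m : ℕ} (W : Matrix (Fin r) (Fin m) ℝ) (α : ℝ) : Prop :=
  ∀ t : Fin r, ∀ y ∈ convexHull ℝ (W '' {t' | t' ≠ t}), α ≤ l1norm (W t - y)

/-- Noise-tolerant factorization under separability: if `M = A * W`
with `A` separable, `W` `α`-robust simplicial (rows normalized in `ℓ1`), `ε ≥ 0`
satisfies `20ε/α + 13ε < α`, and `M'` is a row-ℓ1 `ε`-perturbation of `M`, then there is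
a set `S` of `r` row indices of `M'` such that every row of `M'` lies within `ℓ1`
distance `10ε/α + 7ε` of the convex hull of the rows of `M'` indexed by `S`. -/
theorem stmt14 {n m r : ℕ} (M : Matrix (Fin n) (Fin m) ℝ)
    (A : Matrix (Fin n) (Fin r) ℝ) (W : Matrix (Fin r) (Fin m) ℝ)
    (hA : ∀ i j, 0 ≤ A i j) (hArow : ∀ j : Fin n, ∑ t, |A j t| = 1)
    (hW : ∀ i j, 0 ≤ W i j) (hWrow : ∀ t : Fin r, ∑ l, |W t l| = 1)
    (hfac : M = A * W)
    (hsep : Separable A)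
    (α : ℝ) (hα : 0 < α) (hrob : RobustSimplicial W α)
    (ε : ℝ) (hε : 0 ≤ ε) (hcond : 20 * ε / α + 13 * ε < α)
    (M' : Matrix (Fin n) (Fin m) ℝ)
    (hM' : ∀ j : Fin n, l1norm (M' j - M j) ≤ ε) :
    ∃ S : Finset (Fin n), S.card = r ∧
      ∀ j : Fin n, ∃ y ∈ convexHull ℝ (M' '' (S : Set (Fin n))),
        l1norm (M' j - y) ≤ 10 * ε / α + 7 * ε := by
  classical
  choose f hf1 hf2 using hsep
  have hinj : Function.Injective f := fun a b hab => by
    by_contra hne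
    exact hf1 a (by rw [hab]; exact hf2 b a hne)
  have hAf : ∀ i, A (f i) i = 1 := by
    intro i
    have h := hArow (f i)
    rw [Fintype.sum_eq_single i (fun t ht => by rw [hf2 i t ht, abs_zero])] at h
    rwa [abs_of_nonneg (hA _ _)] at h
  have hMf : ∀ i l, M (f i) l = W i l := by
    intro i l
    rw [hfac, Matrix.mul_apply,
      Fintype.sum_eq_single i (fun t ht => by rw [hf2 i t ht, zero_mul]), hAf, one_mul]
  refine ⟨Finset.image f Finset.univ,
    by rw [Finset.card_image_of_injective _ hinj, Finset.card_univ, Fintype.card_fin], ?_⟩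
  intro j
  have hw0 : ∀ t, 0 ≤ A j t := fun t => hA j t
  have hw1 : ∑ t, A j t = 1 := by
    rw [← hArow j]; exact Finset.sum_congr rfl fun t _ => (abs_of_nonneg (hA j t)).symm
  refine ⟨∑ t, A j t • M' (f t), ?_, ?_⟩
  · have hm := Finset.centerMass_mem_convexHull (Finset.univ) (fun t _ => hw0 t)
      (by rw [hw1]; norm_num)
      (fun t _ => Set.mem_image_of_mem M'
        (by simp : f t ∈ ((Finset.image f Finset.univ : Finset (Fin n)) : Set (Fin n))))
    rwa [Finset.centerMass_eq_of_sum_1 _ _ hw1] at hm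
  · have hMjl : ∀ l, M j l = ∑ t, A j t * M (f t) l := by
      intro l
      rw [hfac, Matrix.mul_apply]
      exact Finset.sum_congr rfl fun t _ => by rw [← hfac, hMf]
    have key : ∀ l, |(M' j - ∑ t, A j t • M' (f t)) l| ≤
        |M' j l - M j l| + ∑ t, A j t * |M' (f t) l - M (f t) l| := by
      intro l
      have heq : (M' j - ∑ t, A j t • M' (f t)) l =
          (M' j l - M j l) + ∑ t, A j t * (M (f t) l - M' (f t) l) := by
        simp only [Pi.sub_apply, Finset.sum_apply, Pi.smul_apply, smul_eq_mul,
          mul_sub, Finset.sum_sub_distrib, ← hMjl l]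
        ring
      rw [heq]
      refine (abs_add_le _ _).trans (add_le_add_right ?_ _)
      refine (Finset.abs_sum_le_sum_abs _ _).trans (Finset.sum_le_sum fun t _ => ?_)
      rw [abs_mul, abs_of_nonneg (hw0 t), abs_sub_comm]
    have hb : l1norm (M' j - ∑ t, A j t • M' (f t)) ≤ 2 * ε := by
      calc l1norm (M' j - ∑ t, A j t • M' (f t))
          ≤ ∑ l, (|M' j l - M j l| + ∑ t, A j t * |M' (f t) l - M (f t) l|) :=
            Finset.sum_le_sum fun l _ => key l
        _ = l1norm (M' j - M j) + ∑ t, A j t * l1norm (M' (f t) - M (f t)) := by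
            rw [Finset.sum_add_distrib, Finset.sum_comm]
            simp [l1norm, Finset.mul_sum]
        _ ≤ ε + ∑ t, A j t * ε :=
            add_le_add (hM' j)
              (Finset.sum_le_sum fun t _ => mul_le_mul_of_nonneg_left (hM' (f t)) (hw0 t))
        _ = 2 * ε := by rw [← Finset.sum_mul, hw1]; ring
    have h1 : 0 ≤ 10 * ε / α := by positivity
    linarith
end

section
/- Let M be an n×m real matrix, A a nonnegative n×r real matrix, and W a nonnegative r×m real matrix such that no row of W is zero and ‖M − A·W‖_F ≤ ε·‖M‖_F for some ε ≥ 0. Then there exist a nonnegative n×r matrix A' and a nonnegative r×m matrix W' with A'·W' = A·W such that: every row of W' has Euclidean norm 1; every column of A' has Euclidean norm at most (1+ε)·‖M‖_F; and ‖A'‖_F ≤ (1+ε)·‖M‖_F. -/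
open Matrix

/-- The Frobenius norm of a matrix. -/
noncomputable def frobNorm {n m : ℕ} (M : Matrix (Fin n) (Fin m) ℝ) : ℝ :=
  Real.sqrt (∑ i, ∑ j, (M i j) ^ 2)

/-- The Euclidean norm of a vector. -/
noncomputable def eNorm {k : ℕ} (x : Fin k → ℝ) : ℝ :=
  Real.sqrt (∑ i, (x i) ^ 2)

lemma sqrt_add_le {ι : Type*} [Fintype ι] (a b : ι → ℝ) :
    Real.sqrt (∑ i, (a i + b i)^2) ≤ Real.sqrt (∑ i, (a i)^2) + Real.sqrt (∑ i, (b i)^2) := by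
  have := norm_add_le ((WithLp.equiv 2 (ι → ℝ)).symm a) ((WithLp.equiv 2 (ι → ℝ)).symm b)
  simpa [EuclideanSpace.norm_eq, sq_abs] using this

lemma frob_triangle {n m : ℕ} (X Y : Matrix (Fin n) (Fin m) ℝ) :
    frobNorm (X + Y) ≤ frobNorm X + frobNorm Y := by
  have h := sqrt_add_le (fun p : Fin n × Fin m => X p.1 p.2) (fun p => Y p.1 p.2)
  simpa [frobNorm, Fintype.sum_prod_type, Matrix.add_apply] using h

/-- Normalization lemma: if `‖M - A W‖_F ≤ ε ‖M‖_F` with `A, W`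
nonnegative and no row of `W` zero, the factorization can be rescaled so that every row
of `W` has Euclidean norm `1`, every column of `A` has Euclidean norm at most
`(1+ε) ‖M‖_F`, and `‖A‖_F ≤ (1+ε) ‖M‖_F`. -/
theorem stmt15 {n m r : ℕ} (M : Matrix (Fin n) (Fin m) ℝ)
    (A : Matrix (Fin n) (Fin r) ℝ) (W : Matrix (Fin r) (Fin m) ℝ)
    (hA : ∀ i j, 0 ≤ A i j) (hW : ∀ i j, 0 ≤ W i j)
    (hWrows : ∀ t : Fin r, W t ≠ 0)
    (ε : ℝ) (hε : 0 ≤ ε)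
    (happrox : frobNorm (M - A * W) ≤ ε * frobNorm M) :
    ∃ (A' : Matrix (Fin n) (Fin r) ℝ) (W' : Matrix (Fin r) (Fin m) ℝ),
      (∀ i j, 0 ≤ A' i j) ∧ (∀ i j, 0 ≤ W' i j) ∧ A' * W' = A * W ∧
      (∀ t : Fin r, eNorm (W' t) = 1) ∧
      (∀ t : Fin r, eNorm (fun i => A' i t) ≤ (1 + ε) * frobNorm M) ∧
      frobNorm A' ≤ (1 + ε) * frobNorm M := by
  -- the row norms of W
  set c : Fin r → ℝ := fun t => eNorm (W t) with hc
  have hcpos : ∀ t, 0 < c t := by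
    intro t
    have hsum : 0 < ∑ j, (W t j) ^ 2 := by
      rcases Function.ne_iff.mp (hWrows t) with ⟨j, hj⟩
      exact Finset.sum_pos' (fun j _ => sq_nonneg _)
        ⟨j, Finset.mem_univ j, pow_pos (lt_of_le_of_ne (hW t j) (Ne.symm hj)) 2⟩
    exact Real.sqrt_pos.mpr hsum
  have hcsq : ∀ t, (c t) ^ 2 = ∑ j, (W t j) ^ 2 := fun t =>
    Real.sq_sqrt (Finset.sum_nonneg fun j _ => sq_nonneg _)
  -- bound on frobNorm (A * W)
  have hAW : frobNorm (A * W) ≤ (1 + ε) * frobNorm M := by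
    have h1 : frobNorm (A * W) ≤ frobNorm M + frobNorm (M - A * W) := by
      have := frob_triangle M (A * W - M)
      simpa [frobNorm] using (by
        have h2 := frob_triangle (A * W - M) M
        rw [sub_add_cancel] at h2
        have h3 : frobNorm (A * W - M) = frobNorm (M - A * W) := by
          unfold frobNorm
          congr 1
          apply Finset.sum_congr rfl; intro i _
          apply Finset.sum_congr rfl; intro j _
          simp [Matrix.sub_apply]; ring
        linarith : frobNorm (A * W) ≤ frobNorm M + frobNorm (M - A * W))
    nlinarith [Real.sqrt_nonneg (∑ i, ∑ j, (M i j) ^ 2)]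
  -- key pointwise bound : A i t * W t j ≤ (A * W) i j
  have hkey : ∀ (i : Fin n) (j : Fin m) (t : Fin r), A i t * W t j ≤ (A * W) i j := by
    intro i j t
    have : (A * W) i j = ∑ s, A i s * W s j := by simp [Matrix.mul_apply]
    rw [this]
    exact Finset.single_le_sum (fun s _ => mul_nonneg (hA i s) (hW s j)) (Finset.mem_univ t)
  have hAWnn : ∀ i j, 0 ≤ (A * W) i j := by
    intro i j
    rw [Matrix.mul_apply]
    exact Finset.sum_nonneg fun s _ => mul_nonneg (hA i s) (hW s j)
  refine ⟨fun i t => A i t * c t, fun t j => W t j / c t, ?_, ?_, ?_, ?_, ?_, ?_⟩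
  · intro i t; exact mul_nonneg (hA i t) (hcpos t).le
  · intro t j; exact div_nonneg (hW t j) (hcpos t).le
  · ext i j
    simp only [Matrix.mul_apply]
    change ∑ t, (A i t * c t) * (W t j / c t) = _
    apply Finset.sum_congr rfl; intro t _
    have h0 := (hcpos t).ne'
    field_simp
  · intro t
    unfold eNorm
    have : ∑ j, (W t j / c t) ^ 2 = (∑ j, (W t j) ^ 2) / (c t) ^ 2 := by
      rw [Finset.sum_div]
      exact Finset.sum_congr rfl fun j _ => by ring
    rw [this, ← hcsq t, div_self (pow_ne_zero 2 (hcpos t).ne'), Real.sqrt_one]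
  · intro t
    unfold eNorm
    have hsq : ∑ i, (A i t * c t) ^ 2 = (∑ i, (A i t)^2) * (c t)^2 := by
      rw [Finset.sum_mul]; exact Finset.sum_congr rfl fun i _ => by ring
    rw [hsq, hcsq t]
    calc Real.sqrt ((∑ i, (A i t)^2) * ∑ j, (W t j)^2)
        = Real.sqrt (∑ i, ∑ j, (A i t * W t j)^2) := by
          congr 1
          rw [Finset.sum_mul_sum]
          exact Finset.sum_congr rfl fun i _ => Finset.sum_congr rfl fun j _ => by ring
      _ ≤ frobNorm (A * W) := by
          apply Real.sqrt_le_sqrt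
          apply Finset.sum_le_sum; intro i _
          apply Finset.sum_le_sum; intro j _
          exact pow_le_pow_left₀ (mul_nonneg (hA i t) (hW t j)) (hkey i j t) 2
      _ ≤ (1 + ε) * frobNorm M := hAW
  · unfold frobNorm
    calc Real.sqrt (∑ i, ∑ t, (A i t * c t) ^ 2)
        ≤ Real.sqrt (∑ i, ∑ j, ((A * W) i j) ^ 2) := by
          apply Real.sqrt_le_sqrt
          have : ∀ i : Fin n, ∑ t, (A i t * c t)^2 ≤ ∑ j, ((A * W) i j)^2 := by
            intro i
            have h1 : ∑ t, (A i t * c t)^2 = ∑ t, ∑ j, (A i t * W t j)^2 := by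
              apply Finset.sum_congr rfl; intro t _
              rw [mul_pow, hcsq t, Finset.mul_sum]
              exact Finset.sum_congr rfl fun j _ => by ring
            rw [h1, Finset.sum_comm]
            apply Finset.sum_le_sum; intro j _
            calc ∑ t, (A i t * W t j)^2
                ≤ (∑ t, A i t * W t j)^2 :=
                  Finset.sum_sq_le_sq_sum_of_nonneg
                    (fun t _ => mul_nonneg (hA i t) (hW t j))
              _ = ((A * W) i j)^2 := by rw [Matrix.mul_apply]
          exact Finset.sum_le_sum fun i _ => this i
      _ ≤ (1 + ε) * frobNorm M := hAW
end

section
/- Let A be a nonnegative n×r real matrix and W a nonnegative r×m real matrix. Then for every t ∈ {1,…,r}: ‖A_t‖·‖W^t‖ ≤ ‖A·W‖_F, where ‖A_t‖ and ‖W^t‖ are the Euclidean norms of the t-th column of A and the t-th row of W, respectively. (Equivalently, the Frobenius norm of the rank-one matrix A_t·W^t, which equals ‖A_t‖·‖W^t‖, is at most ‖A·W‖_F.) -/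
open Matrix

/-- For nonnegative `A` and `W` and each `t`,
`‖A_t‖ ⬝ ‖W^t‖ ≤ ‖A W‖_F`; equivalently, the Frobenius norm of the rank-one outer
product `A_t · W^t` (which equals `‖A_t‖ ⬝ ‖W^t‖`) is at most `‖A W‖_F`. -/
theorem stmt16 {n m r : ℕ}
    (A : Matrix (Fin n) (Fin r) ℝ) (W : Matrix (Fin r) (Fin m) ℝ)
    (hA : ∀ i j, 0 ≤ A i j) (hW : ∀ i j, 0 ≤ W i j) :
    ∀ t : Fin r,
      eNorm (fun i => A i t) * eNorm (W t) ≤ frobNorm (A * W) ∧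
      frobNorm (Matrix.vecMulVec (fun i => A i t) (W t))
        = eNorm (fun i => A i t) * eNorm (W t) := by
  intro t
  have key : ∀ i j, (A i t * W t j) ^ 2 ≤ ((A * W) i j) ^ 2 := by
    intro i j
    have h1 : A i t * W t j ≤ (A * W) i j := by
      rw [Matrix.mul_apply]
      exact Finset.single_le_sum (fun k _ => mul_nonneg (hA i k) (hW k j))
        (Finset.mem_univ t)
    exact pow_le_pow_left₀ (mul_nonneg (hA i t) (hW t j)) h1 2
  have prod_eq : eNorm (fun i => A i t) * eNorm (W t)
      = Real.sqrt (∑ i, ∑ j, (A i t * W t j) ^ 2) := by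
    rw [eNorm, eNorm, ← Real.sqrt_mul (by positivity)]
    congr 1
    rw [Finset.sum_mul_sum]
    simp [mul_pow]
  refine ⟨?_, ?_⟩
  · rw [prod_eq, frobNorm]
    exact Real.sqrt_le_sqrt (Finset.sum_le_sum fun i _ =>
      Finset.sum_le_sum fun j _ => key i j)
  · rw [prod_eq, frobNorm]
    congr 1
end

section
/- Let A be a nonnegative n×r real matrix and W a nonnegative r×m real matrix such that every row of W has Euclidean norm 1. Then ‖A‖_F ≤ ‖A·W‖_F. -/
open Matrix

/-- If `A` and `W` are nonnegative and every row of `W` has Euclidean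
norm `1`, then `‖A‖_F ≤ ‖A W‖_F`. -/
theorem stmt17 {n m r : ℕ}
    (A : Matrix (Fin n) (Fin r) ℝ) (W : Matrix (Fin r) (Fin m) ℝ)
    (hA : ∀ i j, 0 ≤ A i j) (hW : ∀ i j, 0 ≤ W i j)
    (hWrow : ∀ t : Fin r, eNorm (W t) = 1) :
    frobNorm A ≤ frobNorm (A * W) := by
  have hWsq : ∀ t : Fin r, ∑ j, (W t j) ^ 2 = 1 := by
    intro t
    have h := hWrow t
    have hnn : 0 ≤ ∑ j, (W t j) ^ 2 := Finset.sum_nonneg fun j _ => sq_nonneg _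
    have := Real.sqrt_eq_one.mp h
    exact this
  unfold frobNorm
  apply Real.sqrt_le_sqrt
  have key : ∀ i : Fin n, ∑ k, (A i k) ^ 2 ≤ ∑ j, (A * W) i j ^ 2 := by
    intro i
    calc ∑ k, (A i k) ^ 2
        = ∑ k, (A i k) ^ 2 * ∑ j, (W k j) ^ 2 := by
          simp [hWsq]
      _ = ∑ j, ∑ k, (A i k * W k j) ^ 2 := by
          rw [Finset.sum_comm]
          simp [Finset.mul_sum, mul_pow]
      _ ≤ ∑ j, (∑ k, A i k * W k j) ^ 2 := by
          apply Finset.sum_le_sum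
          intro j _
          exact Finset.sum_sq_le_sq_sum_of_nonneg fun k _ => mul_nonneg (hA i k) (hW k j)
      _ = ∑ j, (A * W) i j ^ 2 := by
          simp [Matrix.mul_apply]
  calc ∑ i, ∑ k, (A i k) ^ 2 ≤ ∑ i, ∑ j, (A * W) i j ^ 2 :=
    Finset.sum_le_sum fun i _ => key i
end

section
/- Let M be an n×m real matrix, W an r×m real matrix with ‖W‖_F ≤ √r, and let ε ≥ 0, δ ≥ 0. Suppose A = Σ_{t=1}^r σ_t·u_t·v_tᵀ where (u_1,…,u_r) is an orthonormal family in ℝ^n, (v_1,…,v_r) is an orthonormal family in ℝ^r, and σ_t ≥ 0 for all t. Assume ‖M − A·W‖_F ≤ ε·‖M‖_F. Let T = { t ∈ {1,…,r} : σ_t ≥ δ·‖M‖_F } and define W₀ = (Σ_{t∈T} v_t·v_tᵀ)·W. Then ‖M − A·W₀‖_F ≤ (ε + δ·√r)·‖M‖_F. -/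
open Matrix

lemma ortho_sum {N R : ℕ} (u : Fin R → Fin N → ℝ)
    (hu : ∀ s t : Fin R, ∑ i, u s i * u t i = if s = t then 1 else 0)
    (S : Finset (Fin R)) (f : Fin R → ℝ) :
    ∑ i, (∑ t ∈ S, f t * u t i) ^ 2 = ∑ t ∈ S, (f t) ^ 2 := by
  have h1 : ∀ i : Fin N, (∑ t ∈ S, f t * u t i) ^ 2
      = ∑ t ∈ S, ∑ s ∈ S, (f t * f s) * (u t i * u s i) := by
    intro i
    rw [sq, Finset.sum_mul_sum]
    apply Finset.sum_congr rfl; intro t _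
    apply Finset.sum_congr rfl; intro s _
    ring
  simp only [h1]
  rw [Finset.sum_comm]
  have h2 : ∀ t ∈ S, ∑ i, ∑ s ∈ S, (f t * f s) * (u t i * u s i) = f t ^ 2 := by
    intro t ht
    rw [Finset.sum_comm]
    have h3 : ∀ s ∈ S, ∑ i, (f t * f s) * (u t i * u s i)
        = (f t * f s) * (if t = s then 1 else 0) := by
      intro s _
      rw [← Finset.mul_sum, hu t s]
    rw [Finset.sum_congr rfl h3]
    simp only [mul_ite, mul_one, mul_zero]
    rw [Finset.sum_ite_eq S t (fun s => f t * f s)]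
    simp [ht, sq]
  exact Finset.sum_congr rfl h2

def toE {n m : ℕ} (M : Matrix (Fin n) (Fin m) ℝ) : EuclideanSpace ℝ (Fin n × Fin m) :=
  WithLp.toLp 2 (fun p : Fin n × Fin m => M p.1 p.2)

lemma frob_eq {n m : ℕ} (M : Matrix (Fin n) (Fin m) ℝ) : frobNorm M = ‖toE M‖ := by
  rw [EuclideanSpace.norm_eq, frobNorm, Fintype.sum_prod_type]
  simp [toE, sq_abs]

lemma frob_nonneg {n m : ℕ} (M : Matrix (Fin n) (Fin m) ℝ) : 0 ≤ frobNorm M :=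
  Real.sqrt_nonneg _


lemma vmv_mul_vmv {a b c : ℕ} (p : Fin a → ℝ) (q w : Fin b → ℝ) (z : Fin c → ℝ) :
    Matrix.vecMulVec p q * Matrix.vecMulVec w z = (∑ k, q k * w k) • Matrix.vecMulVec p z := by
  ext i j
  simp only [Matrix.mul_apply, Matrix.vecMulVec_apply, Matrix.smul_apply, smul_eq_mul,
    Finset.sum_mul]
  apply Finset.sum_congr rfl; intro k _; ring

lemma swap_mul {β : Type*} {K : ℕ} (S : Finset β) (f : β → Fin K → ℝ) (g : Fin K → ℝ) :
    ∑ k, (∑ t ∈ S, f t k) * g k = ∑ t ∈ S, ∑ k, f t k * g k := by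
  simp only [Finset.sum_mul]
  exact Finset.sum_comm

/-- Truncating `W` to the significant right singular directions of `A`
(those with `σ_t ≥ δ ‖M‖_F`) yields `W₀` with
`‖M - A W₀‖_F ≤ (ε + δ √r) ‖M‖_F`. -/
theorem stmt18 {n m r : ℕ} (M : Matrix (Fin n) (Fin m) ℝ)
    (W : Matrix (Fin r) (Fin m) ℝ) (hWF : frobNorm W ≤ Real.sqrt r)
    (ε δ : ℝ) (hε : 0 ≤ ε) (hδ : 0 ≤ δ)
    (σ : Fin r → ℝ) (u : Fin r → Fin n → ℝ) (v : Fin r → Fin r → ℝ)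
    (hu : ∀ s t : Fin r, ∑ i, u s i * u t i = if s = t then 1 else 0)
    (hv : ∀ s t : Fin r, ∑ i, v s i * v t i = if s = t then 1 else 0)
    (hσ : ∀ t, 0 ≤ σ t)
    (A : Matrix (Fin n) (Fin r) ℝ)
    (hA : A = ∑ t, σ t • Matrix.vecMulVec (u t) (v t))
    (happrox : frobNorm (M - A * W) ≤ ε * frobNorm M)
    (T : Finset (Fin r)) (hT : ∀ t, t ∈ T ↔ δ * frobNorm M ≤ σ t)
    (W₀ : Matrix (Fin r) (Fin m) ℝ)
    (hW₀ : W₀ = (∑ t ∈ T, Matrix.vecMulVec (v t) (v t)) * W) :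
    frobNorm (M - A * W₀) ≤ (ε + δ * Real.sqrt r) * frobNorm M := by
  set FM := frobNorm M with hFMdef
  have hFM : 0 ≤ FM := frob_nonneg M
  -- column orthonormality of v
  have hv' : ∀ k k' : Fin r, ∑ t, v t k * v t k' = if k = k' then 1 else 0 := by
    set V : Matrix (Fin r) (Fin r) ℝ := Matrix.of v with hV
    have hVVt : V * Vᵀ = 1 := by
      ext s t
      simp [Matrix.mul_apply, hV, Matrix.one_apply, hv s t]
    have hVtV : Vᵀ * V = 1 := mul_eq_one_comm.mp hVVt
    intro k k'
    have := congrFun (congrFun hVtV k) k'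
    simpa [Matrix.mul_apply, hV, Matrix.one_apply] using this
  -- c t j = (v_t)ᵀ W
  set c : Fin r → Fin m → ℝ := fun t j => ∑ k, v t k * W k j with hc
  have hAP : A * (∑ t ∈ T, Matrix.vecMulVec (v t) (v t))
      = ∑ t ∈ T, σ t • Matrix.vecMulVec (u t) (v t) := by
    rw [hA, Matrix.sum_mul]
    have h1 : ∀ s : Fin r, (σ s • Matrix.vecMulVec (u s) (v s)) * ∑ t ∈ T, Matrix.vecMulVec (v t) (v t)
        = ∑ t ∈ T, (σ s * if s = t then 1 else 0) • Matrix.vecMulVec (u s) (v t) := by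
      intro s
      rw [Matrix.mul_sum]
      apply Finset.sum_congr rfl; intro t _
      rw [Matrix.smul_mul, vmv_mul_vmv, hv s t, smul_smul]
    simp only [h1]
    rw [Finset.sum_comm]
    apply Finset.sum_congr rfl; intro t ht
    rw [Finset.sum_eq_single t]
    · simp
    · intro s _ hs
      simp [hs]
    · simp
  have hgen : ∀ (S : Finset (Fin r)) (i : Fin n) (j : Fin m),
      ((∑ t ∈ S, σ t • Matrix.vecMulVec (u t) (v t)) * W) i j = ∑ t ∈ S, σ t * u t i * c t j := by
    intro S i j
    rw [Matrix.mul_apply]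
    simp only [Matrix.sum_apply, Matrix.smul_apply, Matrix.vecMulVec_apply, smul_eq_mul]
    rw [swap_mul]
    apply Finset.sum_congr rfl; intro s _
    simp only [hc]
    rw [Finset.mul_sum]
    apply Finset.sum_congr rfl; intro k _
    ring
  have hAW : ∀ i j, (A * W) i j = ∑ t, σ t * u t i * c t j := by
    intro i j
    rw [hA]
    exact hgen Finset.univ i j
  have hAW0 : ∀ i j, (A * W₀) i j = ∑ t ∈ T, σ t * u t i * c t j := by
    intro i j
    have h : A * W₀ = (∑ t ∈ T, σ t • Matrix.vecMulVec (u t) (v t)) * W := by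
      rw [hW₀, ← Matrix.mul_assoc, hAP]
    rw [h]
    exact hgen T i j
  have hB : ∀ i j, (A * W - A * W₀) i j = ∑ t ∈ Tᶜ, (σ t * c t j) * u t i := by
    intro i j
    have hsplit : ∑ t, σ t * u t i * c t j
        = (∑ t ∈ T, σ t * u t i * c t j) + ∑ t ∈ Tᶜ, σ t * u t i * c t j :=
      (Finset.sum_add_sum_compl T _).symm
    simp only [Matrix.sub_apply, hAW, hAW0, hsplit]
    rw [add_sub_cancel_left]
    apply Finset.sum_congr rfl; intro t _; ring
  -- squared frobenius norm of the difference
  have hSB : ∑ i, ∑ j, ((A * W - A * W₀) i j) ^ 2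
      = ∑ t ∈ Tᶜ, σ t ^ 2 * ∑ j, c t j ^ 2 := by
    simp only [hB]
    rw [Finset.sum_comm]
    have : ∀ j, ∑ i, (∑ t ∈ Tᶜ, (σ t * c t j) * u t i) ^ 2
        = ∑ t ∈ Tᶜ, (σ t * c t j) ^ 2 :=
      fun j => ortho_sum u hu Tᶜ (fun t => σ t * c t j)
    simp only [this]
    rw [Finset.sum_comm]
    apply Finset.sum_congr rfl; intro t _
    rw [Finset.mul_sum]
    apply Finset.sum_congr rfl; intro j _; ring
  -- W frobenius bound
  have hWr : ∑ k, ∑ j, (W k j) ^ 2 ≤ (r : ℝ) := by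
    have h1 : 0 ≤ ∑ k, ∑ j, (W k j) ^ 2 := by positivity
    have h3 := mul_self_le_mul_self (frob_nonneg W) hWF
    rw [frobNorm, Real.mul_self_sqrt h1,
      Real.mul_self_sqrt (by positivity : (0:ℝ) ≤ (r:ℝ))] at h3
    exact h3
  -- sum over all t of ‖c t‖² = ‖W‖²
  have hcW : ∑ t, ∑ j, c t j ^ 2 = ∑ k, ∑ j, (W k j) ^ 2 := by
    rw [Finset.sum_comm]
    have : ∀ j, ∑ t, c t j ^ 2 = ∑ k, (W k j) ^ 2 := by
      intro j
      have := ortho_sum (N := r) (R := r) (fun k t => v t k)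
        (fun k k' => hv' k k') Finset.univ (fun k => W k j)
      rw [← this]
      apply Finset.sum_congr rfl; intro t _
      rw [hc]
      congr 1
      apply Finset.sum_congr rfl; intro k _; ring
    simp only [this]
    rw [Finset.sum_comm]
  -- bound
  have key : frobNorm (A * W - A * W₀) ≤ δ * Real.sqrt r * FM := by
    have hbd : ∑ t ∈ Tᶜ, σ t ^ 2 * ∑ j, c t j ^ 2
        ≤ (δ * FM) ^ 2 * ∑ t ∈ Tᶜ, ∑ j, c t j ^ 2 := by
      rw [Finset.mul_sum]
      apply Finset.sum_le_sum
      intro t ht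
      have hlt : σ t < δ * FM := by
        rw [Finset.mem_compl, hT t] at ht
        linarith [not_le.mp ht]
      have : σ t ^ 2 ≤ (δ * FM) ^ 2 :=
        pow_le_pow_left₀ (hσ t) (le_of_lt hlt) 2
      have hcj : (0:ℝ) ≤ ∑ j, c t j ^ 2 := by positivity
      exact mul_le_mul_of_nonneg_right this hcj
    have hcompl : ∑ t ∈ Tᶜ, ∑ j, c t j ^ 2 ≤ ∑ t, ∑ j, c t j ^ 2 := by
      apply Finset.sum_le_sum_of_subset_of_nonneg (Finset.subset_univ _)
      intro t _ _; positivity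
    have hfinal : ∑ i, ∑ j, ((A * W - A * W₀) i j) ^ 2 ≤ (δ * Real.sqrt r * FM) ^ 2 := by
      rw [hSB]
      calc ∑ t ∈ Tᶜ, σ t ^ 2 * ∑ j, c t j ^ 2
          ≤ (δ * FM) ^ 2 * ∑ t ∈ Tᶜ, ∑ j, c t j ^ 2 := hbd
        _ ≤ (δ * FM) ^ 2 * ∑ t, ∑ j, c t j ^ 2 := by
            apply mul_le_mul_of_nonneg_left _ (by positivity)
            exact hcompl
        _ = (δ * FM) ^ 2 * ∑ k, ∑ j, (W k j) ^ 2 := by rw [hcW]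
        _ ≤ (δ * FM) ^ 2 * r := by
            apply mul_le_mul_of_nonneg_left hWr (by positivity)
        _ = (δ * Real.sqrt r * FM) ^ 2 := by
            rw [mul_pow, mul_pow, mul_pow, Real.sq_sqrt (by positivity : (0:ℝ) ≤ (r:ℝ))]
            ring
    rw [frobNorm]
    calc Real.sqrt (∑ i, ∑ j, ((A * W - A * W₀) i j) ^ 2)
        ≤ Real.sqrt ((δ * Real.sqrt r * FM) ^ 2) := Real.sqrt_le_sqrt hfinal
      _ = δ * Real.sqrt r * FM := Real.sqrt_sq (by positivity)
  -- triangle inequality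
  have tri : frobNorm (M - A * W₀) ≤ frobNorm (M - A * W) + frobNorm (A * W - A * W₀) := by
    have h : M - A * W₀ = (M - A * W) + (A * W - A * W₀) := by
      rw [sub_add_sub_cancel]
    rw [h]
    exact frob_triangle _ _
  calc frobNorm (M - A * W₀) ≤ frobNorm (M - A * W) + frobNorm (A * W - A * W₀) := tri
    _ ≤ ε * FM + δ * Real.sqrt r * FM := add_le_add happrox key
    _ = (ε + δ * Real.sqrt r) * FM := by ring
end

section
/- Let M be a nonzero n×m real matrix, W an r×m real matrix, and let ε ≥ 0, δ > 0. Suppose A = Σ_{t=1}^r σ_t·u_t·v_tᵀ where (u_1,…,u_r) is an orthonormal family in ℝ^n, (v_1,…,v_r) is an orthonormal family in ℝ^r, and σ_t ≥ 0 for all t. Assume ‖M − A·W‖_F ≤ ε·‖M‖_F. Let T = { t ∈ {1,…,r} : σ_t ≥ δ·‖M‖_F } (so σ_t > 0 for t ∈ T), define A⁺ = Σ_{t∈T} σ_t⁻¹·v_t·u_tᵀ and W₀ = (Σ_{t∈T} v_t·v_tᵀ)·W. Then W₀ = A⁺·A·W, every row of the r×m matrix A⁺·M lies in the row space of M, and ‖A⁺·M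 − W₀‖_F ≤ ε/δ. -/
open Matrix

lemma sum_sq_ortho {n : ℕ} {ι : Type*} [Fintype ι] [DecidableEq ι] (T : Finset ι)
    (v : ι → Fin n → ℝ)
    (hv : ∀ s ∈ T, ∀ t ∈ T, ∑ i, v s i * v t i = if s = t then 1 else 0)
    (c : ι → ℝ) :
    ∑ i, (∑ t ∈ T, c t * v t i) ^ 2 = ∑ t ∈ T, c t ^ 2 := by
  have : ∀ i, (∑ t ∈ T, c t * v t i) ^ 2
      = ∑ s ∈ T, ∑ t ∈ T, (c s * c t) * (v s i * v t i) := by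
    intro i
    rw [sq, Finset.sum_mul_sum]
    exact Finset.sum_congr rfl fun s _ => Finset.sum_congr rfl fun t _ => by ring
  simp_rw [this]
  rw [Finset.sum_comm]
  have : ∀ s ∈ T, (∑ i, ∑ t ∈ T, c s * c t * (v s i * v t i)) = c s ^ 2 := by
    intro s hs
    rw [Finset.sum_comm]
    have : ∀ t ∈ T, (∑ i, c s * c t * (v s i * v t i))
        = (c s * c t) * (if s = t then 1 else 0) := by
      intro t ht
      rw [← hv s hs t ht, Finset.mul_sum]
    rw [Finset.sum_congr rfl this]
    simp [Finset.sum_ite_eq, hs, sq]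
  rw [Finset.sum_congr rfl this]

lemma bessel {n : ℕ} {ι : Type*} [Fintype ι] [DecidableEq ι] (T : Finset ι)
    (u : ι → Fin n → ℝ)
    (hu : ∀ s ∈ T, ∀ t ∈ T, ∑ i, u s i * u t i = if s = t then 1 else 0)
    (x : Fin n → ℝ) :
    ∑ t ∈ T, (∑ k, u t k * x k) ^ 2 ≤ ∑ k, x k ^ 2 := by
  set a : ι → ℝ := fun t => ∑ k, u t k * x k with ha
  have hS : ∑ k, (∑ t ∈ T, a t * u t k) ^ 2 = ∑ t ∈ T, a t ^ 2 :=
    sum_sq_ortho T u hu a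
  have hxS : ∑ k, x k * (∑ t ∈ T, a t * u t k) = ∑ t ∈ T, a t ^ 2 := by
    simp_rw [Finset.mul_sum]
    rw [Finset.sum_comm]
    refine Finset.sum_congr rfl fun t _ => ?_
    have : ∀ k, x k * (a t * u t k) = a t * (u t k * x k) := fun k => by ring
    rw [Finset.sum_congr rfl fun k _ => this k, ← Finset.mul_sum, sq]
  have expand : ∑ k, (x k - ∑ t ∈ T, a t * u t k) ^ 2
      = ∑ k, x k ^ 2 - ∑ t ∈ T, a t ^ 2 := by
    have : ∀ k, (x k - ∑ t ∈ T, a t * u t k) ^ 2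
        = x k ^ 2 - 2 * (x k * (∑ t ∈ T, a t * u t k)) + (∑ t ∈ T, a t * u t k) ^ 2 :=
      fun k => by ring
    rw [Finset.sum_congr rfl fun k _ => this k, Finset.sum_add_distrib,
      Finset.sum_sub_distrib, ← Finset.mul_sum, hxS, hS]
    ring
  have hnn : 0 ≤ ∑ k, (x k - ∑ t ∈ T, a t * u t k) ^ 2 :=
    Finset.sum_nonneg fun k _ => sq_nonneg _
  linarith [expand ▸ hnn]


lemma frobNorm_pos {n m : ℕ} {M : Matrix (Fin n) (Fin m) ℝ} (hM0 : M ≠ 0) :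
    0 < frobNorm M := by
  rw [frobNorm]
  apply Real.sqrt_pos.2
  rcases lt_or_eq_of_le (Finset.sum_nonneg fun i _ =>
    Finset.sum_nonneg fun j _ => sq_nonneg (M i j)) with h | h
  · exact h
  · exfalso
    apply hM0
    ext i j
    have h1 := (Finset.sum_eq_zero_iff_of_nonneg fun i _ =>
      Finset.sum_nonneg fun j _ => sq_nonneg (M i j)).1 h.symm i (Finset.mem_univ i)
    have h2 := (Finset.sum_eq_zero_iff_of_nonneg fun j _ => sq_nonneg (M i j)).1 h1 j
      (Finset.mem_univ j)
    simpa using pow_eq_zero_iff (n := 2) (by norm_num) |>.1 h2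


/-- With `A⁺` the pseudo-inverse of the truncation of the SVD of `A`
to the significant singular values (`σ_t ≥ δ ‖M‖_F`), one has `W₀ = A⁺ A W`, every row
of `A⁺ M` lies in the row space of `M`, and `‖A⁺ M - W₀‖_F ≤ ε / δ`. -/
theorem stmt19 {n m r : ℕ} (M : Matrix (Fin n) (Fin m) ℝ) (hM0 : M ≠ 0)
    (W : Matrix (Fin r) (Fin m) ℝ)
    (ε δ : ℝ) (hε : 0 ≤ ε) (hδ : 0 < δ)
    (σ : Fin r → ℝ) (u : Fin r → Fin n → ℝ) (v : Fin r → Fin r → ℝ)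
    (hu : ∀ s t : Fin r, ∑ i, u s i * u t i = if s = t then 1 else 0)
    (hv : ∀ s t : Fin r, ∑ i, v s i * v t i = if s = t then 1 else 0)
    (hσ : ∀ t, 0 ≤ σ t)
    (A : Matrix (Fin n) (Fin r) ℝ)
    (hA : A = ∑ t, σ t • Matrix.vecMulVec (u t) (v t))
    (happrox : frobNorm (M - A * W) ≤ ε * frobNorm M)
    (T : Finset (Fin r)) (hT : ∀ t, t ∈ T ↔ δ * frobNorm M ≤ σ t)
    (Aplus : Matrix (Fin r) (Fin n) ℝ)
    (hAplus : Aplus = ∑ t ∈ T, (σ t)⁻¹ • Matrix.vecMulVec (v t) (u t))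
    (W₀ : Matrix (Fin r) (Fin m) ℝ)
    (hW₀ : W₀ = (∑ t ∈ T, Matrix.vecMulVec (v t) (v t)) * W) :
    W₀ = Aplus * (A * W) ∧
    (∀ t : Fin r, (Aplus * M) t ∈ Submodule.span ℝ (Set.range M)) ∧
    frobNorm (Aplus * M - W₀) ≤ ε / δ := by
  have hc : 0 < frobNorm M := frobNorm_pos hM0
  set c := frobNorm M with hcdef
  have hb : 0 < δ * c := mul_pos hδ hc
  have hσT : ∀ t ∈ T, 0 < σ t := fun t ht => lt_of_lt_of_le hb ((hT t).1 ht)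
  -- Part 1
  have hPA : Aplus * A = ∑ t ∈ T, vecMulVec (v t) (v t) := by
    ext i j
    rw [Matrix.mul_apply]
    simp only [hAplus, hA, Matrix.sum_apply, Matrix.smul_apply, Matrix.vecMulVec_apply,
      smul_eq_mul]
    have step1 : ∀ k, (∑ s ∈ T, (σ s)⁻¹ * (v s i * u s k)) * (∑ t, σ t * (u t k * v t j))
        = ∑ s ∈ T, ∑ t, ((σ s)⁻¹ * σ t * (v s i * v t j)) * (u s k * u t k) := by
      intro k
      rw [Finset.sum_mul_sum]
      exact Finset.sum_congr rfl fun s _ => Finset.sum_congr rfl fun t _ => by ring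
    rw [Finset.sum_congr rfl fun k _ => step1 k, Finset.sum_comm]
    have step2 : ∀ s ∈ T, (∑ k, ∑ t, ((σ s)⁻¹ * σ t * (v s i * v t j)) * (u s k * u t k))
        = v s i * v s j := by
      intro s hs
      rw [Finset.sum_comm]
      have : ∀ t, (∑ k, ((σ s)⁻¹ * σ t * (v s i * v t j)) * (u s k * u t k))
          = ((σ s)⁻¹ * σ t * (v s i * v t j)) * (if s = t then 1 else 0) := by
        intro t
        rw [← hu s t, Finset.mul_sum]
      rw [Finset.sum_congr rfl fun t _ => this t]
      simp only [mul_ite, mul_one, mul_zero, Finset.sum_ite_eq, Finset.mem_univ, if_true]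
      rw [inv_mul_cancel₀ (ne_of_gt (hσT s hs))]
      ring
    rw [Finset.sum_congr rfl step2]
  have part1 : W₀ = Aplus * (A * W) := by
    rw [hW₀, ← hPA, Matrix.mul_assoc]
  -- Part 2
  have part2 : ∀ t : Fin r, (Aplus * M) t ∈ Submodule.span ℝ (Set.range M) := by
    intro t
    have : (Aplus * M) t = ∑ i, Aplus t i • M i := by
      ext j
      simp [Matrix.mul_apply]
    rw [this]
    exact Submodule.sum_mem _ fun i _ =>
      Submodule.smul_mem _ _ (Submodule.subset_span ⟨i, rfl⟩)
  refine ⟨part1, part2, ?_⟩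
  -- Part 3
  set E := M - A * W with hE
  have hdiff : Aplus * M - W₀ = Aplus * E := by
    rw [hE, Matrix.mul_sub, part1]
  rw [hdiff]
  have hentry : ∀ i j, (Aplus * E) i j
      = ∑ t ∈ T, ((σ t)⁻¹ * ∑ k, u t k * E k j) * v t i := by
    intro i j
    rw [Matrix.mul_apply]
    simp only [hAplus, Matrix.sum_apply, Matrix.smul_apply, Matrix.vecMulVec_apply,
      smul_eq_mul]
    rw [Finset.sum_congr rfl fun k (_ : k ∈ Finset.univ) =>
      (Finset.sum_mul T (fun t => (σ t)⁻¹ * (v t i * u t k)) (E k j)), Finset.sum_comm]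
    refine Finset.sum_congr rfl fun t _ => ?_
    rw [Finset.mul_sum, Finset.sum_mul]
    exact Finset.sum_congr rfl fun k _ => by ring
  have hcol : ∀ j, (∑ i, (Aplus * E) i j ^ 2)
      ≤ ((δ * c)⁻¹) ^ 2 * ∑ k, E k j ^ 2 := by
    intro j
    have heq : (∑ i, (Aplus * E) i j ^ 2)
        = ∑ t ∈ T, ((σ t)⁻¹ * ∑ k, u t k * E k j) ^ 2 := by
      rw [Finset.sum_congr rfl fun i (_ : i ∈ Finset.univ) => by rw [hentry i j]]
      exact sum_sq_ortho T v (fun s _ t _ => hv s t)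
        (fun t => (σ t)⁻¹ * ∑ k, u t k * E k j)
    rw [heq]
    have hstep : ∑ t ∈ T, ((σ t)⁻¹ * ∑ k, u t k * E k j) ^ 2
        ≤ ∑ t ∈ T, ((δ * c)⁻¹) ^ 2 * (∑ k, u t k * E k j) ^ 2 := by
      refine Finset.sum_le_sum fun t ht => ?_
      rw [mul_pow]
      refine mul_le_mul_of_nonneg_right ?_ (sq_nonneg _)
      have h1 : (σ t)⁻¹ ≤ (δ * c)⁻¹ :=
        one_div (σ t) ▸ inv_anti₀ hb ((hT t).1 ht)
      exact pow_le_pow_left₀ (inv_nonneg.2 (hσ t)) h1 2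
    refine le_trans hstep ?_
    rw [← Finset.mul_sum]
    exact mul_le_mul_of_nonneg_left (bessel T u (fun s _ t _ => hu s t) fun k => E k j)
      (sq_nonneg _)
  have hS : ∑ i, ∑ j, (Aplus * E) i j ^ 2 ≤ (ε / δ) ^ 2 := by
    rw [Finset.sum_comm]
    have h1 : ∑ j, ∑ i, (Aplus * E) i j ^ 2
        ≤ ∑ j, ((δ * c)⁻¹) ^ 2 * ∑ k, E k j ^ 2 :=
      Finset.sum_le_sum fun j _ => hcol j
    refine le_trans h1 ?_
    rw [← Finset.mul_sum, Finset.sum_comm]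
    have hF : ∑ k, ∑ j, E k j ^ 2 = (frobNorm E) ^ 2 := by
      rw [frobNorm]
      exact (Real.sq_sqrt (Finset.sum_nonneg fun k _ =>
        Finset.sum_nonneg fun j _ => sq_nonneg _)).symm
    rw [hF]
    have hFb : (frobNorm E) ^ 2 ≤ (ε * c) ^ 2 := by
      refine pow_le_pow_left₀ ?_ happrox 2
      exact Real.sqrt_nonneg _
    calc ((δ * c)⁻¹) ^ 2 * (frobNorm E) ^ 2
        ≤ ((δ * c)⁻¹) ^ 2 * (ε * c) ^ 2 :=
          mul_le_mul_of_nonneg_left hFb (sq_nonneg _)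
      _ = (ε / δ) ^ 2 := by
          field_simp
  rw [frobNorm]
  calc Real.sqrt (∑ i, ∑ j, (Aplus * E) i j ^ 2)
      ≤ Real.sqrt ((ε / δ) ^ 2) := Real.sqrt_le_sqrt hS
    _ = ε / δ := Real.sqrt_sq (div_nonneg hε (le_of_lt hδ))
end
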